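/- arXiv:1301.6638 — 11 statements merged into one kernel-verified Lean document; each statement's English description precedes it below -/
import Mathlib

section
/- For every real number a, the integral over [0, ∞) of Φ(a x) φ(x) dx equals 1/4 + (1/(2π)) · arctan(a), where φ is the standard Gaussian density and Φ its distribution function. -/
open MeasureTheory Real

/-- Standard normal density. -/
noncomputable def stdPdf (x : ℝ) : ℝ := (Real.sqrt (2 * Real.pi))⁻¹ * Real.exp (-x ^ 2 / 2)

/-- Standard normal distribution function. -/
noncomputable def stdCdf (x : ℝ) : ℝ := ∫ t in Set.Iic x, stdPdf t


lemma stdPdf_nonneg (x : ℝ) : 0 ≤ stdPdf x := by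
  unfold stdPdf; positivity

lemma continuous_stdPdf : Continuous stdPdf := by
  unfold stdPdf; fun_prop

lemma stdPdf_le (x : ℝ) : stdPdf x ≤ (Real.sqrt (2 * Real.pi))⁻¹ := by
  unfold stdPdf
  have : Real.exp (-x ^ 2 / 2) ≤ 1 := by
    rw [Real.exp_le_one_iff]; nlinarith [sq_nonneg x]
  nlinarith [this, inv_nonneg.2 (Real.sqrt_nonneg (2 * Real.pi))]

lemma integrable_stdPdf : Integrable stdPdf := by
  have h : Integrable (fun x : ℝ => Real.exp (-(1/2) * x ^ 2)) := integrable_exp_neg_mul_sq (by norm_num)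
  have := h.const_mul (Real.sqrt (2 * Real.pi))⁻¹
  convert this using 2 with x
  unfold stdPdf; ring_nf

lemma integral_stdPdf : ∫ x, stdPdf x = 1 := by
  have h : ∫ x : ℝ, Real.exp (-(1/2) * x ^ 2) = Real.sqrt (π / (1/2)) := integral_gaussian (1/2)
  have h2 : ∫ x, stdPdf x = (Real.sqrt (2 * π))⁻¹ * ∫ x : ℝ, Real.exp (-(1/2) * x ^ 2) := by
    rw [← integral_const_mul]; congr 1 with x; unfold stdPdf; ring_nf
  rw [h2, h]
  have : π / (1/2) = 2 * π := by ring
  rw [this, inv_mul_cancel₀ (by positivity : Real.sqrt (2 * π) ≠ 0)]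

lemma stdCdf_eq (y : ℝ) : stdCdf y = stdCdf 0 + ∫ t in (0:ℝ)..y, stdPdf t := by
  unfold stdCdf
  rw [← intervalIntegral.integral_Iic_sub_Iic integrable_stdPdf.integrableOn
    integrable_stdPdf.integrableOn]
  ring

lemma hasDerivAt_stdCdf (y : ℝ) : HasDerivAt stdCdf (stdPdf y) y := by
  have h : HasDerivAt (fun u => ∫ t in (0:ℝ)..u, stdPdf t) (stdPdf y) y :=
    intervalIntegral.integral_hasDerivAt_right
      integrable_stdPdf.intervalIntegrable
      (continuous_stdPdf.stronglyMeasurableAtFilter _ _)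
      continuous_stdPdf.continuousAt
  have := h.const_add (stdCdf 0)
  simpa [← stdCdf_eq] using this

lemma stdCdf_nonneg (y : ℝ) : 0 ≤ stdCdf y :=
  integral_nonneg stdPdf_nonneg

lemma stdCdf_le_one (y : ℝ) : stdCdf y ≤ 1 := by
  rw [← integral_stdPdf]
  exact setIntegral_le_integral integrable_stdPdf (Filter.Eventually.of_forall stdPdf_nonneg)

lemma stdCdf_zero : stdCdf 0 = 1/2 := by
  have hsymm : ∫ t in Set.Iic (0:ℝ), stdPdf t = ∫ t in Set.Ioi (0:ℝ), stdPdf t := by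
    have h := integral_comp_neg_Iic (0:ℝ) stdPdf
    rw [neg_zero] at h
    rw [← h]; congr 1 with t; unfold stdPdf; ring_nf
  have hsplit : (∫ t in Set.Iic (0:ℝ), stdPdf t) + ∫ t in Set.Ioi (0:ℝ), stdPdf t = 1 := by
    rw [← integral_stdPdf]
    exact intervalIntegral.integral_Iic_add_Ioi integrable_stdPdf.integrableOn
      integrable_stdPdf.integrableOn
  unfold stdCdf
  linarith

lemma integral_x_exp (c : ℝ) (hc : 0 < c) :
    ∫ x in Set.Ioi (0:ℝ), x * Real.exp (-c * x ^ 2) = 1 / (2 * c) := by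
  have hderiv : ∀ x ∈ Set.Ici (0:ℝ),
      HasDerivAt (fun x : ℝ => -(2 * c)⁻¹ * Real.exp (-c * x ^ 2))
        (x * Real.exp (-c * x ^ 2)) x := by
    intro x _
    have h1 : HasDerivAt (fun x : ℝ => -c * x ^ 2) (-c * (2 * x)) x := by
      simpa using ((hasDerivAt_pow 2 x).const_mul (-c))
    have h2 := (h1.exp).const_mul (-(2 * c)⁻¹)
    refine h2.congr_deriv ?_
    field_simp
  have hint : IntegrableOn (fun x => x * Real.exp (-c * x ^ 2)) (Set.Ioi 0) :=
    (integrable_mul_exp_neg_mul_sq hc).integrableOn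
  have htend : Filter.Tendsto (fun x : ℝ => -(2 * c)⁻¹ * Real.exp (-c * x ^ 2))
      Filter.atTop (nhds 0) := by
    have h : Filter.Tendsto (fun x : ℝ => c * x ^ 2) Filter.atTop Filter.atTop :=
      (Filter.tendsto_pow_atTop two_ne_zero).const_mul_atTop hc
    have h2 := Real.tendsto_exp_neg_atTop_nhds_zero.comp h
    have h3 : Filter.Tendsto (fun x : ℝ => Real.exp (-c * x ^ 2)) Filter.atTop (nhds 0) := by
      simpa [Function.comp_def, neg_mul] using h2
    simpa using h3.const_mul (-(2 * c)⁻¹)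
  have := integral_Ioi_of_hasDerivAt_of_tendsto' hderiv hint htend
  rw [this]
  norm_num

lemma continuous_stdCdf : Continuous stdCdf :=
  continuous_iff_continuousAt.mpr fun y => (hasDerivAt_stdCdf y).continuousAt

lemma integral_stdPdf_Ici : ∫ x in Set.Ici (0:ℝ), stdPdf x = 1/2 := by
  have hsymm : ∫ t in Set.Iic (0:ℝ), stdPdf t = ∫ t in Set.Ioi (0:ℝ), stdPdf t := by
    have h := integral_comp_neg_Iic (0:ℝ) stdPdf
    rw [neg_zero] at h
    rw [← h]; congr 1 with t; unfold stdPdf; ring_nf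
  have hsplit : (∫ t in Set.Iic (0:ℝ), stdPdf t) + ∫ t in Set.Ioi (0:ℝ), stdPdf t = 1 := by
    rw [← integral_stdPdf]
    exact intervalIntegral.integral_Iic_add_Ioi integrable_stdPdf.integrableOn
      integrable_stdPdf.integrableOn
  rw [setIntegral_congr_set Ioi_ae_eq_Ici.symm]
  linarith

lemma stdPdf_mul (u x : ℝ) : stdPdf u * stdPdf x = (2 * π)⁻¹ * Real.exp (-((u^2 + x^2)/2)) := by
  unfold stdPdf
  have h : (Real.sqrt (2*π))⁻¹ * (Real.sqrt (2*π))⁻¹ = (2*π)⁻¹ := by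
    rw [← mul_inv, Real.mul_self_sqrt (by positivity)]
  rw [show ((Real.sqrt (2*π))⁻¹ * Real.exp (-u^2/2)) * ((Real.sqrt (2*π))⁻¹ * Real.exp (-x^2/2))
      = ((Real.sqrt (2*π))⁻¹ * (Real.sqrt (2*π))⁻¹) * (Real.exp (-u^2/2) * Real.exp (-x^2/2)) by ring,
    h, ← Real.exp_add]
  ring_nf

noncomputable def G (a : ℝ) : ℝ := ∫ x in Set.Ici (0:ℝ), stdCdf (a * x) * stdPdf x

lemma hasDerivAt_G (a : ℝ) :
    HasDerivAt G ((2 * π)⁻¹ * (1 + a ^ 2)⁻¹) a := by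
  have sqpos : (0:ℝ) < Real.sqrt (2 * π) := Real.sqrt_pos.mpr (by positivity)
  set μ := volume.restrict (Set.Ici (0:ℝ))
  have key := hasDerivAt_integral_of_dominated_loc_of_deriv_le (μ := μ)
      (F := fun b x => stdCdf (b * x) * stdPdf x)
      (F' := fun b x => x * stdPdf (b * x) * stdPdf x)
      (x₀ := a) (bound := fun x => |x| * (Real.sqrt (2 * π))⁻¹ * stdPdf x)
      (s := Set.univ) Filter.univ_mem
      (Filter.Eventually.of_forall fun b =>
        ((continuous_stdCdf.comp (continuous_const.mul continuous_id)).mul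
          continuous_stdPdf).aestronglyMeasurable)
      ?hint
      (((continuous_id.mul (continuous_stdPdf.comp (continuous_const.mul continuous_id))).mul
          continuous_stdPdf).aestronglyMeasurable)
      (Filter.Eventually.of_forall ?hbound)
      ?bddint
      (Filter.Eventually.of_forall ?hdiff)
  case hint =>
    refine Integrable.mono (integrable_stdPdf.integrableOn)
      (((continuous_stdCdf.comp (continuous_const.mul continuous_id)).mul
          continuous_stdPdf).aestronglyMeasurable) ?_
    refine Filter.Eventually.of_forall fun x => ?_
    rw [Real.norm_eq_abs, Real.norm_eq_abs, abs_of_nonneg (stdPdf_nonneg x),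
      abs_of_nonneg (mul_nonneg (stdCdf_nonneg _) (stdPdf_nonneg _))]
    nlinarith [stdCdf_le_one (a*x), stdCdf_nonneg (a*x), stdPdf_nonneg x]
  case hbound =>
    intro x b _
    rw [Real.norm_eq_abs, abs_mul, abs_mul, abs_of_nonneg (stdPdf_nonneg _),
      abs_of_nonneg (stdPdf_nonneg _)]
    show |x| * stdPdf (b * x) * stdPdf x ≤ |x| * (Real.sqrt (2 * π))⁻¹ * stdPdf x
    exact mul_le_mul_of_nonneg_right
      (mul_le_mul_of_nonneg_left (stdPdf_le _) (abs_nonneg x)) (stdPdf_nonneg x)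
  case bddint =>
    have h1 : Integrable (fun x : ℝ => x * Real.exp (-(1/2 : ℝ) * x ^ 2)) :=
      integrable_mul_exp_neg_mul_sq (by norm_num)
    have h2 : Integrable (fun x : ℝ =>
        x * (Real.sqrt (2 * π))⁻¹ * stdPdf x) μ := by
      have h3 := (h1.const_mul ((Real.sqrt (2 * π))⁻¹ * (Real.sqrt (2 * π))⁻¹)).integrableOn
        (s := Set.Ici 0)
      exact h3.congr_fun (fun x _ => by unfold stdPdf; ring_nf) measurableSet_Ici
    refine h2.congr ?_
    refine (ae_restrict_iff' measurableSet_Ici).mpr (Filter.Eventually.of_forall fun x hx => ?_)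
    show x * (Real.sqrt (2 * π))⁻¹ * stdPdf x = |x| * (Real.sqrt (2 * π))⁻¹ * stdPdf x
    rw [abs_of_nonneg hx]
  case hdiff =>
    intro x b _
    have h1 : HasDerivAt (fun b : ℝ => b * x) x b := by
      simpa using (hasDerivAt_id b).mul_const x
    have h2 := ((hasDerivAt_stdCdf (b * x)).comp b h1).mul_const (stdPdf x)
    refine h2.congr_deriv ?_
    ring
  -- now key.2 : HasDerivAt (fun b => ∫ x, F b x ∂μ) (∫ x, F' a x ∂μ) a
  have heval : (∫ x, x * stdPdf (a * x) * stdPdf x ∂μ) = (2 * π)⁻¹ * (1 + a ^ 2)⁻¹ := by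
    have hc : (0:ℝ) < (1 + a ^ 2) / 2 := by positivity
    have hrw : ∀ x : ℝ, x * stdPdf (a * x) * stdPdf x
        = (2 * π)⁻¹ * (x * Real.exp (-((1 + a ^ 2) / 2) * x ^ 2)) := by
      intro x
      rw [mul_assoc, stdPdf_mul]
      ring_nf
    calc (∫ x, x * stdPdf (a * x) * stdPdf x ∂μ)
        = ∫ x in Set.Ici (0:ℝ), (2 * π)⁻¹ * (x * Real.exp (-((1 + a ^ 2) / 2) * x ^ 2)) := by
          simp only [μ]; congr 1 with x; rw [hrw]
      _ = (2 * π)⁻¹ * ∫ x in Set.Ioi (0:ℝ), x * Real.exp (-((1 + a ^ 2) / 2) * x ^ 2) := by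
          rw [setIntegral_congr_set Ioi_ae_eq_Ici.symm, integral_const_mul]
      _ = (2 * π)⁻¹ * (1 + a ^ 2)⁻¹ := by
          rw [integral_x_exp _ hc]; congr 1; field_simp
  have := key.2
  rw [heval] at this
  exact this

/-- For every real `a`, `∫_{[0,∞)} Φ(a x) φ(x) dx = 1/4 + arctan a / (2π)`. -/
theorem integral_cdf_pdf_Ici (a : ℝ) :
    ∫ x in Set.Ici (0 : ℝ), stdCdf (a * x) * stdPdf x =
      1 / 4 + (1 / (2 * Real.pi)) * Real.arctan a := by
  have hπ : (0:ℝ) < π := Real.pi_pos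
  set H : ℝ → ℝ := fun a => G a - (1 / 4 + (1 / (2 * π)) * Real.arctan a) with hH
  have hderiv : ∀ b, HasDerivAt H 0 b := by
    intro b
    have h1 := hasDerivAt_G b
    have h2 : HasDerivAt (fun b : ℝ => 1 / 4 + (1 / (2 * π)) * Real.arctan b)
        ((1 / (2 * π)) * (1 / (1 + b ^ 2))) b :=
      ((Real.hasDerivAt_arctan b).const_mul (1 / (2 * π))).const_add (1/4)
    have h3 := h1.sub h2
    have : (2 * π)⁻¹ * (1 + b ^ 2)⁻¹ - 1 / (2 * π) * (1 / (1 + b ^ 2)) = 0 := by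
      field_simp
      ring
    rwa [this] at h3
  have hdiff : Differentiable ℝ H := fun b => (hderiv b).differentiableAt
  have hconst : H a = H 0 := is_const_of_deriv_eq_zero hdiff (fun b => (hderiv b).deriv) a 0
  have hH0 : H 0 = 0 := by
    have hG0 : G 0 = 1 / 4 := by
      unfold G
      have : ∀ x : ℝ, stdCdf (0 * x) * stdPdf x = (1/2) * stdPdf x := by
        intro x; rw [zero_mul, stdCdf_zero]
      rw [show (fun x => stdCdf (0 * x) * stdPdf x) = fun x => (1/2) * stdPdf x from funext this]
      rw [integral_const_mul, integral_stdPdf_Ici]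
      norm_num
    simp [hH, hG0, Real.arctan_zero]
  have : G a = 1 / 4 + (1 / (2 * π)) * Real.arctan a := by
    have := hconst.trans hH0
    simp only [hH] at this
    linarith
  exact this
end

section
/- For every real number a, the integral over (−∞, 0] of Φ(a x) φ(x) dx equals 1/4 − (1/(2π)) · arctan(a), where φ is the standard Gaussian density and Φ its distribution function. -/
open MeasureTheory Real

lemma stdPdf_eq (x : ℝ) : stdPdf x = (Real.sqrt (2 * Real.pi))⁻¹ * Real.exp (-(1/2) * x ^ 2) := by
  rw [stdPdf]; ring_nf

lemma sqrt_two_pi_pos : 0 < Real.sqrt (2 * Real.pi) :=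
  Real.sqrt_pos.2 (by positivity)

lemma stdPdf_neg (x : ℝ) : stdPdf (-x) = stdPdf x := by
  simp [stdPdf, neg_sq]

lemma key_int {b : ℝ} (hb : 0 < b) :
    ∫ x in Set.Iic (0:ℝ), x * Real.exp (-b * x ^ 2) = -(2*b)⁻¹ := by
  have hderiv : ∀ x ∈ Set.Iic (0:ℝ),
      HasDerivAt (fun x => -(2*b)⁻¹ * Real.exp (-b * x ^ 2))
        (x * Real.exp (-b * x ^ 2)) x := by
    intro x _
    have h1 : HasDerivAt (fun x : ℝ => -b * x ^ 2) (-b * (2 * x ^ 1)) x :=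
      (hasDerivAt_pow 2 x).const_mul (-b)
    have h2 := (h1.exp).const_mul (-(2*b)⁻¹)
    refine h2.congr_deriv ?_
    field_simp
  have htendsto : Filter.Tendsto (fun x => -(2*b)⁻¹ * Real.exp (-b * x ^ 2))
      Filter.atBot (nhds 0) := by
    rw [show (0:ℝ) = -(2*b)⁻¹ * 0 by ring]
    apply Filter.Tendsto.const_mul
    apply Real.tendsto_exp_atBot.comp
    have hsq : Filter.Tendsto (fun x : ℝ => x ^ 2) Filter.atBot Filter.atTop := by
      have := (Filter.tendsto_pow_atTop (by norm_num : 2 ≠ 0)).comp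
        (Filter.tendsto_neg_atBot_atTop (G := ℝ))
      exact this.congr (fun x => by simp [neg_pow])
    have h2 : Filter.Tendsto (fun x : ℝ => b * x ^ 2) Filter.atBot Filter.atTop :=
      hsq.const_mul_atTop hb
    exact (Filter.tendsto_neg_atTop_atBot.comp h2).congr (fun x => by simp)
  have := integral_Iic_of_hasDerivAt_of_tendsto' hderiv
    ((integrable_mul_exp_neg_mul_sq hb).integrableOn) htendsto
  rw [this]
  simp

lemma prod_pdf (a x : ℝ) :
    stdPdf (a * x) * stdPdf x = (2 * Real.pi)⁻¹ * Real.exp (-((1 + a^2)/2) * x ^ 2) := by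
  rw [stdPdf, stdPdf]
  have hsq : (Real.sqrt (2 * Real.pi))⁻¹ * (Real.sqrt (2 * Real.pi))⁻¹ = (2 * Real.pi)⁻¹ := by
    rw [← mul_inv]
    congr 1
    exact Real.mul_self_sqrt (by positivity)
  calc (Real.sqrt (2 * Real.pi))⁻¹ * Real.exp (-(a * x) ^ 2 / 2) *
        ((Real.sqrt (2 * Real.pi))⁻¹ * Real.exp (-x ^ 2 / 2))
      = ((Real.sqrt (2 * Real.pi))⁻¹ * (Real.sqrt (2 * Real.pi))⁻¹) *
        (Real.exp (-(a * x) ^ 2 / 2) * Real.exp (-x ^ 2 / 2)) := by ring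
    _ = (2 * Real.pi)⁻¹ * Real.exp (-((1 + a^2)/2) * x ^ 2) := by
        rw [hsq, ← Real.exp_add]
        congr 1
        ring

lemma deriv_integral_value (a : ℝ) :
    ∫ x in Set.Iic (0:ℝ), x * stdPdf (a * x) * stdPdf x
      = -((1 / (2 * Real.pi)) * (1 + a ^ 2)⁻¹) := by
  have : ∀ x : ℝ, x * stdPdf (a * x) * stdPdf x
      = (2 * Real.pi)⁻¹ * (x * Real.exp (-((1 + a^2)/2) * x ^ 2)) := by
    intro x
    rw [mul_assoc, prod_pdf]
    ring
  simp_rw [this]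
  rw [integral_const_mul, key_int (by positivity : (0:ℝ) < (1 + a^2)/2)]
  have h2 : (2 * ((1 + a^2)/2)) = 1 + a^2 := by ring
  rw [h2]
  field_simp

lemma bound_integrable :
    Integrable (fun x => |x| * ((Real.sqrt (2 * Real.pi))⁻¹ * stdPdf x))
      (volume.restrict (Set.Iic (0:ℝ))) := by
  have h : Integrable (fun x : ℝ => |x| * ((Real.sqrt (2 * Real.pi))⁻¹ * stdPdf x)) := by
    have h1 : Integrable (fun x : ℝ => |x * Real.exp (-(1/2) * x ^ 2)|) :=
      (integrable_mul_exp_neg_mul_sq (by norm_num : (0:ℝ) < 1/2)).abs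
    have h2 := (h1.const_mul ((Real.sqrt (2 * Real.pi))⁻¹ * (Real.sqrt (2 * Real.pi))⁻¹))
    apply h2.congr
    filter_upwards with x
    rw [abs_mul, abs_of_nonneg (Real.exp_pos _).le, stdPdf_eq]
    ring
  exact h.restrict

theorem hasDerivAt_F (a : ℝ) :
    HasDerivAt (fun c => ∫ x in Set.Iic (0:ℝ), stdCdf (c * x) * stdPdf x)
      (-((1 / (2 * Real.pi)) * (1 + a ^ 2)⁻¹)) a := by
  have main := hasDerivAt_integral_of_dominated_loc_of_deriv_le
    (μ := volume.restrict (Set.Iic (0:ℝ))) (x₀ := a)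
    (F := fun c x => stdCdf (c * x) * stdPdf x)
    (F' := fun c x => x * stdPdf (c * x) * stdPdf x)
    (bound := fun x => |x| * ((Real.sqrt (2 * Real.pi))⁻¹ * stdPdf x))
    (s := Metric.ball a 1) (Metric.ball_mem_nhds a one_pos)
    ?_ ?_ ?_ ?_ bound_integrable ?_
  · rw [deriv_integral_value a] at main
    exact main.2
  · filter_upwards with c
    exact ((continuous_stdCdf.comp (continuous_const.mul continuous_id)).mul
      continuous_stdPdf).aestronglyMeasurable
  · apply Integrable.mono (integrable_stdPdf.restrict (s := Set.Iic (0:ℝ)))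
    · exact ((continuous_stdCdf.comp (continuous_const.mul continuous_id)).mul
        continuous_stdPdf).aestronglyMeasurable
    · filter_upwards with x
      rw [Real.norm_eq_abs, Real.norm_eq_abs, abs_of_nonneg (stdPdf_nonneg x),
        abs_of_nonneg (mul_nonneg (stdCdf_nonneg _) (stdPdf_nonneg _))]
      calc stdCdf (a * x) * stdPdf x ≤ 1 * stdPdf x := by
            gcongr
            · exact stdPdf_nonneg x
            · exact stdCdf_le_one _
        _ = stdPdf x := one_mul _
  · exact ((continuous_id.mul (continuous_stdPdf.comp
      (continuous_const.mul continuous_id))).mul continuous_stdPdf).aestronglyMeasurable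
  · filter_upwards with x
    intro c _
    rw [Real.norm_eq_abs, abs_mul, abs_mul, abs_of_nonneg (stdPdf_nonneg _),
      abs_of_nonneg (stdPdf_nonneg _)]
    rw [mul_assoc]
    gcongr
    · exact stdPdf_nonneg _
    · exact stdPdf_le _
  · filter_upwards with x
    intro c _
    have h1 : HasDerivAt (fun c : ℝ => c * x) x c := hasDerivAt_mul_const x
    have h2 := ((hasDerivAt_stdCdf (c * x)).comp c h1).mul_const (stdPdf x)
    refine h2.congr_deriv ?_
    ring

/-- For every real `a`, `∫_{(-∞,0]} Φ(a x) φ(x) dx = 1/4 - arctan a / (2π)`. -/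
theorem integral_cdf_pdf_Iic (a : ℝ) :
    ∫ x in Set.Iic (0 : ℝ), stdCdf (a * x) * stdPdf x =
      1 / 4 - (1 / (2 * Real.pi)) * Real.arctan a := by
  set F : ℝ → ℝ := fun c => ∫ x in Set.Iic (0:ℝ), stdCdf (c * x) * stdPdf x with hF
  set G : ℝ → ℝ := fun c => 1 / 4 - (1 / (2 * Real.pi)) * Real.arctan c with hG
  have hGderiv : ∀ c : ℝ, HasDerivAt G (-((1 / (2 * Real.pi)) * (1 + c ^ 2)⁻¹)) c := by
    intro c
    have h := ((Real.hasDerivAt_arctan c).const_mul (1 / (2 * Real.pi))).const_sub (1/4)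
    refine h.congr_deriv ?_
    ring
  have hdiff : ∀ c : ℝ, HasDerivAt (fun c => F c - G c) 0 c := by
    intro c
    have := (hasDerivAt_F c).sub (hGderiv c)
    rw [sub_self] at this
    exact this
  have hconst : F a - G a = F 0 - G 0 :=
    is_const_of_deriv_eq_zero (f := fun c => F c - G c)
      (fun c => (hdiff c).differentiableAt) (fun c => (hdiff c).deriv) a 0
  have hF0 : F 0 = 1 / 4 := by
    rw [hF]
    simp only [zero_mul]
    rw [integral_const_mul]
    rw [show (∫ x in Set.Iic (0:ℝ), stdPdf x) = stdCdf 0 from rfl, stdCdf_zero]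
    norm_num
  have hG0 : G 0 = 1 / 4 := by simp [hG]
  show F a = G a
  clear_value F G
  linarith [hconst, hF0, hG0]
end

section
/- Let X and Y be independent standard Gaussian random variables and β ∈ ℝ. Then E[Y · sgn(X − βY)] = −2β/(√(2π)·√(1+β²)), where sgn(x) = 1 if x > 0, −1 if x < 0, and 0 if x = 0. -/
open MeasureTheory ProbabilityTheory Real Set Filter
open scoped NNReal ENNReal

namespace ExpSign

lemma measurable_sign' : Measurable Real.sign := by
  have : Real.sign = fun r : ℝ => if r < 0 then (-1:ℝ) else if 0 < r then 1 else 0 := by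
    funext r; rw [Real.sign]
  rw [this]
  exact Measurable.ite measurableSet_Iio measurable_const
    (Measurable.ite measurableSet_Ioi measurable_const measurable_const)

lemma abs_sign_le (t : ℝ) : |Real.sign t| ≤ 1 := by
  rcases Real.sign_apply_eq t with h | h | h <;> rw [h] <;> norm_num

noncomputable def P : ℝ → ℝ := gaussianPDFReal 0 1

lemma P_def (x : ℝ) : P x = (Real.sqrt (2 * π))⁻¹ * Real.exp (-x^2/2) := by
  simp [P, gaussianPDFReal]

lemma P_meas : Measurable P := measurable_gaussianPDFReal 0 1

lemma P_even (x : ℝ) : P (-x) = P x := by simp [P_def]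

lemma hasDeriv_negP (y : ℝ) : HasDerivAt (fun t => -P t) (y * P y) y := by
  have h : HasDerivAt (fun t : ℝ => -t^2/2) (-y) y := by
    have := ((hasDerivAt_pow 2 y).neg).div_const 2
    refine this.congr_deriv ?_
    simp; ring
  have h2 := (h.exp).const_mul ((Real.sqrt (2 * π))⁻¹)
  have h3 := h2.neg
  simp only [P_def]
  refine h3.congr_deriv ?_
  ring

lemma integrable_mul_P : Integrable (fun y : ℝ => y * P y) := by
  have := (integrable_mul_exp_neg_mul_sq (b := 1/2) (by norm_num)).const_mul
    ((Real.sqrt (2 * π))⁻¹)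
  refine this.congr ?_
  filter_upwards with y
  rw [P_def]; ring_nf

lemma tendsto_negP : Tendsto (fun y : ℝ => -P y) atTop (nhds 0) := by
  have h1 : Tendsto (fun y : ℝ => -y^2/2) atTop atBot := by
    apply Filter.Tendsto.atBot_div_const (by norm_num)
    exact tendsto_neg_atTop_atBot.comp (tendsto_pow_atTop two_ne_zero)
  have := (Real.tendsto_exp_atBot.comp h1).const_mul ((Real.sqrt (2 * π))⁻¹)
  simp only [P_def]
  simpa using this.neg

lemma integral_Ioi_mul_P (c : ℝ) : ∫ y in Ioi c, y * P y = P c := by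
  have := integral_Ioi_of_hasDerivAt_of_tendsto' (f := fun t => -P t)
    (f' := fun y => y * P y) (a := c)
    (fun x _ => hasDeriv_negP x) (integrable_mul_P.integrableOn) tendsto_negP
  simpa using this

lemma integral_Iio_mul_P (c : ℝ) : ∫ y in Iio c, y * P y = -P c := by
  rw [← integral_Iic_eq_integral_Iio, show Iic c = Iic (- -c) by rw [neg_neg],
    ← integral_comp_neg_Ioi (-c) (fun y => y * P y)]
  have h : ∀ y : ℝ, -y * P (-y) = -(y * P y) := by intro y; rw [P_even]; ring
  simp_rw [h, integral_neg, integral_Ioi_mul_P, P_even]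

lemma integral_gaussianReal01 (g : ℝ → ℝ) :
    ∫ y, g y ∂(gaussianReal 0 1) = ∫ y, P y * g y := by
  rw [gaussianReal_of_var_ne_zero 0 one_ne_zero, gaussianPDF_def]
  have : (fun x => ENNReal.ofReal (gaussianPDFReal 0 1 x))
      = fun x => ((Real.toNNReal (gaussianPDFReal 0 1 x) : ℝ≥0) : ℝ≥0∞) := rfl
  rw [this, integral_withDensity_eq_integral_smul
    ((measurable_gaussianPDFReal 0 1).real_toNNReal)]
  congr 1; funext x
  rw [NNReal.smul_def, Real.coe_toNNReal _ (gaussianPDFReal_nonneg 0 1 x)]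
  rfl

lemma integrable_gaussianReal01 {g : ℝ → ℝ} (h : Integrable (fun y => P y * g y)) :
    Integrable g (gaussianReal 0 1) := by
  rw [gaussianReal_of_var_ne_zero 0 one_ne_zero, gaussianPDF_def]
  have heq : (fun x => ENNReal.ofReal (gaussianPDFReal 0 1 x))
      = fun x => ((Real.toNNReal (gaussianPDFReal 0 1 x) : ℝ≥0) : ℝ≥0∞) := rfl
  rw [heq, integrable_withDensity_iff_integrable_smul
    ((measurable_gaussianPDFReal 0 1).real_toNNReal)]
  refine h.congr ?_
  filter_upwards with y
  rw [NNReal.smul_def, Real.coe_toNNReal _ (gaussianPDFReal_nonneg 0 1 y)]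
  rfl

lemma integrable_inner (β x : ℝ) :
    Integrable (fun y : ℝ => P y * (y * Real.sign (x - β * y))) := by
  refine integrable_mul_P.abs.mono' ?_ ?_
  · exact ((P_meas.mul (measurable_id.mul (measurable_sign'.comp
      (measurable_const.sub (measurable_id.const_mul β))))).aestronglyMeasurable)
  · filter_upwards with y
    have hs := abs_sign_le (x - β * y)
    rw [Real.norm_eq_abs, abs_mul, abs_mul, abs_mul]
    have h0 : 0 ≤ |P y| * |y| := by positivity
    nlinarith [abs_nonneg (Real.sign (x - β * y)), abs_nonneg (P y), abs_nonneg y]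

lemma integral_id_mu : ∫ y, y ∂(gaussianReal 0 1) = 0 := by
  rw [integral_gaussianReal01]
  have h : ∀ y : ℝ, P y * y = y * P y := fun y => mul_comm _ _
  simp_rw [h]
  rw [← intervalIntegral.integral_Iio_add_Ici (b := 0) integrable_mul_P.integrableOn
    integrable_mul_P.integrableOn, integral_Ici_eq_integral_Ioi,
    integral_Iio_mul_P, integral_Ioi_mul_P]
  ring

lemma inner_eq (β x : ℝ) :
    ∫ y, y * Real.sign (x - β * y) ∂(gaussianReal 0 1)
      = -2 * Real.sign β * P (x / β) := by
  rcases lt_trichotomy β 0 with hβ | hβ | hβ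
  · rw [Real.sign_of_neg hβ, integral_gaussianReal01]
    rw [← intervalIntegral.integral_Iio_add_Ici (b := x / β) (integrable_inner β x).integrableOn
      (integrable_inner β x).integrableOn, integral_Ici_eq_integral_Ioi]
    rw [setIntegral_congr_fun measurableSet_Iio
      (g := fun y => -(y * P y)) ?_, setIntegral_congr_fun measurableSet_Ioi
      (g := fun y => y * P y) ?_]
    · rw [integral_neg, integral_Iio_mul_P, integral_Ioi_mul_P]; ring
    · intro y hy
      rw [mem_Ioi] at hy
      have hxy : 0 < x - β * y := by
        have := (div_lt_iff_of_neg hβ).mp hy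
        linarith
      simp only [Real.sign_of_pos hxy]; ring
    · intro y hy
      rw [mem_Iio] at hy
      have hxy : x - β * y < 0 := by
        have := (lt_div_iff_of_neg hβ).mp hy
        linarith
      simp only [Real.sign_of_neg hxy]; ring
  · subst hβ
    simp only [Real.sign_zero, zero_mul, mul_zero, sub_zero]
    rw [show (fun y : ℝ => y * Real.sign x) = fun y : ℝ => Real.sign x * y by
      funext y; ring]
    rw [integral_const_mul, integral_id_mu]
    ring
  · rw [Real.sign_of_pos hβ, integral_gaussianReal01]
    rw [← intervalIntegral.integral_Iio_add_Ici (b := x / β) (integrable_inner β x).integrableOn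
      (integrable_inner β x).integrableOn, integral_Ici_eq_integral_Ioi]
    rw [setIntegral_congr_fun measurableSet_Iio
      (g := fun y => y * P y) ?_, setIntegral_congr_fun measurableSet_Ioi
      (g := fun y => -(y * P y)) ?_]
    · rw [integral_neg, integral_Iio_mul_P, integral_Ioi_mul_P]; ring
    · intro y hy
      rw [mem_Ioi] at hy
      have hxy : x - β * y < 0 := by
        have := (div_lt_iff₀ hβ).mp hy
        linarith [mul_comm β y]
      simp only [Real.sign_of_neg hxy]; ring
    · intro y hy
      rw [mem_Iio] at hy
      have hxy : 0 < x - β * y := by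
        have := (lt_div_iff₀ hβ).mp hy
        linarith [mul_comm β y]
      simp only [Real.sign_of_pos hxy]; ring

lemma sign_mul_abs' {β : ℝ} (hβ : β ≠ 0) : Real.sign β * |β| = β := by
  rcases hβ.lt_or_gt with h | h
  · rw [Real.sign_of_neg h, abs_of_neg h]; ring
  · rw [Real.sign_of_pos h, abs_of_pos h]; ring

lemma integral_P_mul {β : ℝ} (hβ : β ≠ 0) :
    ∫ x : ℝ, P x * P (x / β) = |β| / (Real.sqrt (2 * π) * Real.sqrt (1 + β ^ 2)) := by
  have h2π : (0:ℝ) < 2 * π := by positivity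
  have hss : Real.sqrt (2 * π) * Real.sqrt (2 * π) = 2 * π := Real.mul_self_sqrt h2π.le
  have hb : (0:ℝ) < 1/2 + 1/(2 * β^2) := by positivity
  have h1 : ∀ x : ℝ, P x * P (x / β)
      = (2 * π)⁻¹ * Real.exp (-(1/2 + 1/(2 * β^2)) * x^2) := by
    intro x
    have he : Real.exp (-x^2/2) * Real.exp (-(x/β)^2/2)
        = Real.exp (-(1/2 + 1/(2 * β^2)) * x^2) := by
      rw [← Real.exp_add]; congr 1; field_simp; ring
    rw [P_def, P_def]
    calc (Real.sqrt (2*π))⁻¹ * Real.exp (-x^2/2) * ((Real.sqrt (2*π))⁻¹ * Real.exp (-(x/β)^2/2))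
        = (Real.sqrt (2*π) * Real.sqrt (2*π))⁻¹ *
          (Real.exp (-x^2/2) * Real.exp (-(x/β)^2/2)) := by
          rw [mul_inv]; ring
      _ = (2 * π)⁻¹ * Real.exp (-(1/2 + 1/(2 * β^2)) * x^2) := by rw [hss, he]
  simp_rw [h1]
  rw [integral_const_mul, integral_gaussian]
  have h2 : π / (1/2 + 1/(2 * β^2)) = (2 * π * β^2) / (1 + β^2) := by
    field_simp; ring
  rw [h2, Real.sqrt_div (by positivity) (1 + β^2), Real.sqrt_mul (by positivity : (0:ℝ) ≤ 2*π) (β^2),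
    Real.sqrt_sq_eq_abs]
  rw [show (2*π : ℝ) = Real.sqrt (2*π) * Real.sqrt (2*π) from hss.symm]
  have hs0 : Real.sqrt (2*π) ≠ 0 := by positivity
  have hs1 : Real.sqrt (1+β^2) ≠ 0 := by positivity
  field_simp
  ring_nf
  rw [Real.sqrt_sq (Real.sqrt_nonneg _)]

end ExpSign

open ExpSign

/-- If `X, Y` are independent standard Gaussians and `β ∈ ℝ`, then
`E[Y · sgn(X − βY)] = −2β/(√(2π)·√(1+β²))`. -/
theorem expectation_mul_sign {Ω : Type*} [MeasureSpace Ω]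
    [IsProbabilityMeasure (ℙ : Measure Ω)]
    (X Y : Ω → ℝ) (hXm : Measurable X) (hYm : Measurable Y)
    (hindep : IndepFun X Y ℙ)
    (hX : Measure.map X ℙ = gaussianReal 0 1)
    (hY : Measure.map Y ℙ = gaussianReal 0 1) (β : ℝ) :
    ∫ ω, Y ω * Real.sign (X ω - β * Y ω) ∂ℙ =
      -2 * β / (Real.sqrt (2 * Real.pi) * Real.sqrt (1 + β ^ 2)) := by
  have hf_meas : Measurable (fun p : ℝ × ℝ => p.2 * Real.sign (p.1 - β * p.2)) :=
    measurable_snd.mul (measurable_sign'.comp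
      (measurable_fst.sub (measurable_snd.const_mul β)))
  have hmap : Measure.map (fun ω => (X ω, Y ω)) ℙ
      = (gaussianReal 0 1).prod (gaussianReal 0 1) := by
    refine ((indepFun_iff_map_prod_eq_prod_map_map hXm.aemeasurable
      hYm.aemeasurable).mp hindep).trans ?_
    rw [hX, hY]
  have hid : Integrable (fun y : ℝ => y) (gaussianReal 0 1) := by
    refine integrable_gaussianReal01 (integrable_mul_P.congr ?_)
    filter_upwards with y using (mul_comm _ _)
  have hmapsnd : Measure.map Prod.snd ((gaussianReal 0 1).prod (gaussianReal 0 1))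
      = gaussianReal 0 1 := by
    simp [Measure.map_snd_prod]
  have hsnd : Integrable (fun p : ℝ × ℝ => p.2)
      ((gaussianReal 0 1).prod (gaussianReal 0 1)) := by
    have h0 : Integrable (fun y : ℝ => y)
        (Measure.map Prod.snd ((gaussianReal 0 1).prod (gaussianReal 0 1))) := by
      rw [hmapsnd]; exact hid
    have h1 : AEStronglyMeasurable (fun y : ℝ => y)
        (Measure.map Prod.snd ((gaussianReal 0 1).prod (gaussianReal 0 1))) := by
      rw [hmapsnd]; exact hid.aestronglyMeasurable
    exact (integrable_map_measure h1 measurable_snd.aemeasurable).mp h0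
  have hfint : Integrable (fun p : ℝ × ℝ => p.2 * Real.sign (p.1 - β * p.2))
      ((gaussianReal 0 1).prod (gaussianReal 0 1)) := by
    refine hsnd.abs.mono' hf_meas.aestronglyMeasurable ?_
    filter_upwards with p
    rw [Real.norm_eq_abs, abs_mul]
    have h1 := abs_sign_le (p.1 - β * p.2)
    nlinarith [abs_nonneg p.2, abs_nonneg (Real.sign (p.1 - β * p.2))]
  have step1 : ∫ ω, Y ω * Real.sign (X ω - β * Y ω) ∂ℙ
      = ∫ p : ℝ × ℝ, p.2 * Real.sign (p.1 - β * p.2)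
          ∂((gaussianReal 0 1).prod (gaussianReal 0 1)) := by
    rw [← hmap, integral_map (hXm.prodMk hYm).aemeasurable
      (hmap ▸ hf_meas.aestronglyMeasurable)]
  rw [step1, integral_prod _ hfint]
  simp_rw [inner_eq β]
  by_cases hβ0 : β = 0
  · subst hβ0
    simp [Real.sign_zero]
  · rw [integral_gaussianReal01]
    have harr : ∀ x : ℝ, P x * (-2 * Real.sign β * P (x / β))
        = (-2 * Real.sign β) * (P x * P (x / β)) := fun x => by ring
    simp_rw [harr]
    rw [integral_const_mul, integral_P_mul hβ0]
    rw [show -2 * Real.sign β * (|β| / (Real.sqrt (2 * π) * Real.sqrt (1 + β ^ 2)))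
      = -2 * (Real.sign β * |β|) / (Real.sqrt (2 * π) * Real.sqrt (1 + β ^ 2)) by ring,
      sign_mul_abs' hβ0]
end

section
/- With M = cY·sgn(aX + bY − cY), X, Y independent standard Gaussians, a > 0, c > 0, β = (c−b)/a, for every k ≥ 1 one has E[M^{2k−1}] = −(2^k (k−1)! c^{2k−1} β / √(2π(1+β²))) · Σ_{j=0}^{k−1} ((2j−1)!!/(2j)!!) · (1+β²)^{−j}. -/
open MeasureTheory ProbabilityTheory Real Finset Filter
open scoped ENNReal NNReal

namespace OddMomentsAux


noncomputable def phi (x : ℝ) : ℝ := (Real.sqrt (2 * π))⁻¹ * Real.exp (-(1/2) * x ^ 2)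
lemma sqrt2pi_pos : 0 < Real.sqrt (2 * π) := Real.sqrt_pos.mpr (by positivity)
lemma phi_pos (x : ℝ) : 0 < phi x := by unfold phi; positivity
lemma continuous_phi : Continuous phi := by unfold phi; fun_prop
lemma integrable_pow_gauss {b : ℝ} (hb : 0 < b) (n : ℕ) :
    Integrable (fun x : ℝ => x ^ n * Real.exp (-b * x ^ 2)) := by
  have h := integrable_rpow_mul_exp_neg_mul_sq hb
    (s := (n:ℝ)) (lt_of_lt_of_le neg_one_lt_zero (Nat.cast_nonneg n))
  simpa [Real.rpow_natCast] using h
lemma integrable_abs_pow_gauss {b : ℝ} (hb : 0 < b) (n : ℕ) :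
    Integrable (fun x : ℝ => |x| ^ n * Real.exp (-b * x ^ 2)) := by
  refine (integrable_pow_gauss hb n).abs.congr (Filter.Eventually.of_forall fun x => ?_)
  simp only [abs_mul, abs_pow, abs_of_pos (Real.exp_pos _)]
lemma integrable_phi : Integrable phi := by
  refine ((integrable_pow_gauss (b := 1/2) (by norm_num) 0).const_mul
    (Real.sqrt (2 * π))⁻¹).congr (Filter.Eventually.of_forall fun x => ?_)
  simp [phi]
lemma integral_phi : ∫ x, phi x = 1 := by
  have h : ∫ x : ℝ, Real.exp (-(1/2) * x ^ 2) = Real.sqrt (π / (1/2)) :=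
    integral_gaussian (1/2)
  have h2 : Real.sqrt (π / (1/2)) = Real.sqrt (2 * π) := by norm_num [mul_comm]
  unfold phi
  rw [integral_const_mul, h, h2, inv_mul_cancel₀ (ne_of_gt sqrt2pi_pos)]

section Key
variable (β : ℝ)

noncomputable def uu (y : ℝ) : ℝ := -2 * ∫ s in (0:ℝ)..(β*y), phi s

lemma uu_hasDeriv (y : ℝ) : HasDerivAt (uu β) (-2 * β * phi (β*y)) y := by
  have hF : HasDerivAt (fun t => ∫ s in (0:ℝ)..t, phi s) (phi (β*y)) (β*y) :=
    intervalIntegral.integral_hasDerivAt_right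
      (continuous_phi.intervalIntegrable _ _)
      (continuous_phi.stronglyMeasurable.stronglyMeasurableAtFilter)
      continuous_phi.continuousAt
  have hmul : HasDerivAt (fun y : ℝ => β * y) β y := by
    simpa using (hasDerivAt_id y).const_mul β
  have h1 : HasDerivAt (fun y : ℝ => ∫ s in (0:ℝ)..(β*y), phi s) (phi (β*y) * β) y :=
    HasDerivAt.comp y hF hmul
  have h2 : HasDerivAt (uu β) (-2 * (phi (β*y) * β)) y := h1.const_mul (-2)
  convert h2 using 1
  ring

lemma uu_cont : Continuous (uu β) :=
  continuous_iff_continuousAt.mpr fun y => (uu_hasDeriv β y).continuousAt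

lemma uu_bound (y : ℝ) : |uu β y| ≤ 2 := by
  have h1 : |∫ s in (0:ℝ)..(β*y), phi s| ≤ 1 := by
    have h2 := intervalIntegral.norm_integral_le_integral_norm_uIoc
      (f := phi) (a := (0:ℝ)) (b := β*y) (μ := volume)
    have h3 : ∫ x in Set.Ioc (min 0 (β*y)) (max 0 (β*y)), ‖phi x‖ ≤ ∫ x, phi x := by
      have he : ∀ x, ‖phi x‖ = phi x := fun x => abs_of_pos (phi_pos x)
      simp only [he]
      exact setIntegral_le_integral integrable_phi
        (Filter.Eventually.of_forall fun x => (phi_pos x).le)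
    rw [integral_phi] at h3
    calc |∫ s in (0:ℝ)..(β*y), phi s| ≤ _ := h2
    _ ≤ 1 := h3
  have he : |uu β y| = 2 * |∫ s in (0:ℝ)..(β*y), phi s| := by
    rw [uu, abs_mul]; norm_num
  rw [he]; linarith

lemma integrable_uu_mul (n : ℕ) :
    Integrable (fun y => uu β y * (y ^ n * Real.exp (-(1/2) * y^2))) := by
  have hcont : Continuous fun y => uu β y * (y ^ n * Real.exp (-(1/2) * y^2)) :=
    (uu_cont β).mul (by fun_prop)
  refine Integrable.mono' ((integrable_abs_pow_gauss (by norm_num : (0:ℝ) < 1/2) n).const_mul 2)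
    hcont.aestronglyMeasurable (Filter.Eventually.of_forall fun y => ?_)
  rw [Real.norm_eq_abs, abs_mul, abs_mul, abs_pow, abs_of_pos (Real.exp_pos _)]
  exact mul_le_mul_of_nonneg_right (uu_bound β y) (by positivity)

lemma exp_deriv_half (y : ℝ) : HasDerivAt (fun y : ℝ => Real.exp (-(1/2) * y^2))
    (Real.exp (-(1/2) * y^2) * (-y)) y := by
  have hq : HasDerivAt (fun y : ℝ => -(1/2) * y^2) (-y) y := by
    have h := (hasDerivAt_pow 2 y).const_mul (-(1/2) : ℝ)
    refine h.congr_deriv ?_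
    push_cast
    ring
  exact hq.exp

lemma key_closed (m : ℕ) :
    ∫ y : ℝ, uu β y * (y ^ (2*m+1) * Real.exp (-(1/2) * y^2))
      = -2*β*(Real.sqrt (2*π))⁻¹ *
        ∑ i ∈ range (m+1),
          ((2:ℝ)^m * (Nat.factorial m : ℝ) / ((2:ℝ)^i * (Nat.factorial i : ℝ))) *
            ∫ x : ℝ, x ^ (2*i) * Real.exp (-((1+β^2)/2) * x^2) := by
  have hb2 : (0:ℝ) < (1+β^2)/2 := by positivity
  have hu'v_eq : ∀ (n : ℕ) (y : ℝ),
      (-2 * β * phi (β*y)) * (y ^ n * Real.exp (-(1/2) * y^2))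
        = (-2*β*(Real.sqrt (2*π))⁻¹) * (y ^ n * Real.exp (-((1+β^2)/2) * y^2)) := by
    intro n y
    have hexp : Real.exp (-(1/2) * (β*y)^2) * Real.exp (-(1/2) * y^2)
        = Real.exp (-((1+β^2)/2) * y^2) := by
      rw [← Real.exp_add]; congr 1; ring
    calc (-2 * β * phi (β*y)) * (y ^ n * Real.exp (-(1/2) * y^2))
        = -2*β*(Real.sqrt (2*π))⁻¹ *
          (y ^ n * (Real.exp (-(1/2) * (β*y)^2) * Real.exp (-(1/2) * y^2))) := by
          unfold phi; ring
    _ = _ := by rw [hexp]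
  induction m with
  | zero =>
      have huv' : Integrable (fun y => uu β y *
          (Real.exp (-(1/2) * y^2) * (-y))) := by
        refine ((integrable_uu_mul β 1).neg).congr (Filter.Eventually.of_forall fun y => ?_)
        simp only [Pi.neg_apply]
        ring
      have hu'v : Integrable (fun y => (-2 * β * phi (β*y)) * Real.exp (-(1/2) * y^2)) := by
        refine ((integrable_pow_gauss hb2 0).const_mul
          (-2*β*(Real.sqrt (2*π))⁻¹)).congr (Filter.Eventually.of_forall fun y => ?_)
        have h := (hu'v_eq 0 y).symm
        simpa using h
      have huv : Integrable (fun y => uu β y * Real.exp (-(1/2) * y^2)) := by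
        refine (integrable_uu_mul β 0).congr (Filter.Eventually.of_forall fun y => ?_)
        ring
      have hparts := integral_mul_deriv_eq_deriv_mul_of_integrable
        (fun y _ => uu_hasDeriv β y) (fun y _ => exp_deriv_half y) huv' hu'v huv
      have hL : (∫ y : ℝ, uu β y * (Real.exp (-(1/2) * y^2) * (-y)))
          = -∫ y : ℝ, uu β y * (y ^ (2*0+1) * Real.exp (-(1/2) * y^2)) := by
        rw [← integral_neg]
        refine integral_congr_ae (Filter.Eventually.of_forall fun y => ?_)
        ring
      have hR : (∫ y : ℝ, (-2 * β * phi (β*y)) * Real.exp (-(1/2) * y^2))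
          = (-2*β*(Real.sqrt (2*π))⁻¹) *
            ∫ x : ℝ, x ^ (2*0) * Real.exp (-((1+β^2)/2) * x^2) := by
        rw [← integral_const_mul]
        refine integral_congr_ae (Filter.Eventually.of_forall fun y => ?_)
        have h := hu'v_eq 0 y
        simpa using h
      rw [hL, hR] at hparts
      rw [sum_range_one]
      simp only [Nat.factorial_zero, Nat.cast_one, pow_zero]
      linear_combination -hparts
  | succ m ih =>
      have hvpow : ∀ y : ℝ, HasDerivAt (fun y : ℝ => y ^ (2*m+2))
          (((2*m+2 : ℕ) : ℝ) * y ^ (2*m+1)) y := by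
        intro y
        simpa using hasDerivAt_pow (2*m+2) y
      have hv : ∀ y : ℝ, HasDerivAt (fun y : ℝ => y ^ (2*m+2) * Real.exp (-(1/2) * y^2))
          (((2*m+2 : ℕ) : ℝ) * y ^ (2*m+1) * Real.exp (-(1/2) * y^2)
            + y ^ (2*m+2) * (Real.exp (-(1/2) * y^2) * (-y))) y :=
        fun y => (hvpow y).mul (exp_deriv_half y)
      have huv' : Integrable (fun y => uu β y *
          (((2*m+2 : ℕ) : ℝ) * y ^ (2*m+1) * Real.exp (-(1/2) * y^2)
            + y ^ (2*m+2) * (Real.exp (-(1/2) * y^2) * (-y)))) := by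
        refine (((integrable_uu_mul β (2*m+1)).const_mul ((2*m+2 : ℕ) : ℝ)).sub
          (integrable_uu_mul β (2*m+3))).congr (Filter.Eventually.of_forall fun y => ?_)
        simp only [Pi.sub_apply]
        push_cast
        ring
      have hu'v : Integrable (fun y => (-2 * β * phi (β*y)) *
          (y ^ (2*m+2) * Real.exp (-(1/2) * y^2))) := by
        refine ((integrable_pow_gauss hb2 (2*m+2)).const_mul
          (-2*β*(Real.sqrt (2*π))⁻¹)).congr (Filter.Eventually.of_forall fun y => ?_)
        exact (hu'v_eq (2*m+2) y).symm
      have huv : Integrable (fun y => uu β y * (y ^ (2*m+2) * Real.exp (-(1/2) * y^2))) :=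
        integrable_uu_mul β (2*m+2)
      have hparts := integral_mul_deriv_eq_deriv_mul_of_integrable
        (fun y _ => uu_hasDeriv β y) (fun y _ => hv y) huv' hu'v huv
      have hL : (∫ y : ℝ, uu β y *
          (((2*m+2 : ℕ) : ℝ) * y ^ (2*m+1) * Real.exp (-(1/2) * y^2)
            + y ^ (2*m+2) * (Real.exp (-(1/2) * y^2) * (-y))))
          = ∫ y : ℝ, (((2*m+2 : ℕ) : ℝ) * (uu β y * (y ^ (2*m+1) * Real.exp (-(1/2) * y^2)))
              - uu β y * (y ^ (2*(m+1)+1) * Real.exp (-(1/2) * y^2))) := by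
        refine integral_congr_ae (Filter.Eventually.of_forall fun y => ?_)
        push_cast
        ring
      rw [integral_sub ((integrable_uu_mul β (2*m+1)).const_mul _)
        (integrable_uu_mul β (2*(m+1)+1)), integral_const_mul] at hL
      have hR : (∫ y : ℝ, (-2 * β * phi (β*y)) * (y ^ (2*m+2) * Real.exp (-(1/2) * y^2)))
          = (-2*β*(Real.sqrt (2*π))⁻¹) *
            ∫ x : ℝ, x ^ (2*(m+1)) * Real.exp (-((1+β^2)/2) * x^2) := by
        rw [← integral_const_mul]
        refine integral_congr_ae (Filter.Eventually.of_forall fun y => ?_)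
        have h := hu'v_eq (2*m+2) y
        rw [show 2*(m+1) = 2*m+2 by ring]
        exact h
      rw [hL, hR, ih] at hparts
      have hsum : ∑ i ∈ range (m+1+1),
            ((2:ℝ)^(m+1) * (Nat.factorial (m+1) : ℝ) / ((2:ℝ)^i * (Nat.factorial i : ℝ))) *
              ∫ x : ℝ, x ^ (2*i) * Real.exp (-((1+β^2)/2) * x^2)
          = ((2*m+2 : ℕ) : ℝ) * ∑ i ∈ range (m+1),
              ((2:ℝ)^m * (Nat.factorial m : ℝ) / ((2:ℝ)^i * (Nat.factorial i : ℝ))) *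
                (∫ x : ℝ, x ^ (2*i) * Real.exp (-((1+β^2)/2) * x^2))
            + ∫ x : ℝ, x ^ (2*(m+1)) * Real.exp (-((1+β^2)/2) * x^2) := by
        rw [sum_range_succ, mul_sum]
        congr 1
        · refine sum_congr rfl fun i _ => ?_
          rw [← mul_assoc]
          congr 1
          rw [Nat.factorial_succ, pow_succ]
          push_cast
          ring
        · rw [show ((2:ℝ)^(m+1) * (Nat.factorial (m+1) : ℝ) /
              ((2:ℝ)^(m+1) * (Nat.factorial (m+1) : ℝ))) = 1 by
            rw [div_self]
            positivity]
          ring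
      rw [hsum]
      linear_combination -hparts

end Key

lemma measurable_real_sign : Measurable Real.sign := by
  have h : Real.sign = fun r : ℝ => if r < 0 then (-1:ℝ) else if 0 < r then 1 else 0 :=
    funext fun r => rfl
  rw [h]
  exact Measurable.ite (measurableSet_lt measurable_id measurable_const) measurable_const
    (Measurable.ite (measurableSet_lt measurable_const measurable_id) measurable_const
      measurable_const)

lemma abs_sign_le (z : ℝ) : |Real.sign z| ≤ 1 := by
  rcases Real.sign_apply_eq z with h | h | h <;> rw [h] <;> norm_num

lemma sign_pos_mul {a : ℝ} (ha : 0 < a) (z : ℝ) : Real.sign (a * z) = Real.sign z := by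
  rcases lt_trichotomy z 0 with h | h | h
  · rw [Real.sign_of_neg h, Real.sign_of_neg (mul_neg_of_pos_of_neg ha h)]
  · rw [h, mul_zero]
  · rw [Real.sign_of_pos h, Real.sign_of_pos (mul_pos ha h)]

lemma sign_odd_pow (z : ℝ) (n : ℕ) : (Real.sign z) ^ (2*n+1) = Real.sign z := by
  rcases Real.sign_apply_eq z with h | h | h <;> rw [h]
  · exact Odd.neg_one_pow ⟨n, by ring⟩
  · exact zero_pow (by omega)
  · exact one_pow _

lemma integrable_phi_sign (t : ℝ) : Integrable (fun x => phi x * Real.sign (x - t)) := by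
  refine Integrable.mono' integrable_phi
    ((continuous_phi.measurable.mul
      (measurable_real_sign.comp (measurable_id.sub measurable_const))).aestronglyMeasurable)
    (Filter.Eventually.of_forall fun x => ?_)
  rw [Real.norm_eq_abs, abs_mul, abs_of_pos (phi_pos x)]
  calc phi x * |Real.sign (x - t)| ≤ phi x * 1 :=
    mul_le_mul_of_nonneg_left (abs_sign_le _) (le_of_lt (phi_pos x))
  _ = phi x := mul_one _

lemma Phi_zero : ∫ x in Set.Iic (0:ℝ), phi x = 1/2 := by
  have hsym : ∫ x in Set.Ioi (0:ℝ), phi x = ∫ x in Set.Iic (0:ℝ), phi x := by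
    have h1 : ∫ x in Set.Ioi (0:ℝ), phi x = ∫ x in Set.Ioi (0:ℝ), phi (-x) := by
      refine setIntegral_congr_fun measurableSet_Ioi fun x _ => ?_
      simp [phi, neg_sq]
    rw [h1, integral_comp_neg_Ioi]
    norm_num
  have htot := intervalIntegral.integral_Iic_add_Ioi (b := (0:ℝ))
    integrable_phi.integrableOn integrable_phi.integrableOn
  rw [integral_phi, hsym] at htot
  linarith

lemma sign_int (t : ℝ) :
    ∫ x, phi x * Real.sign (x - t) = -2 * ∫ s in (0:ℝ)..t, phi s := by
  have hint := integrable_phi_sign t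
  have hIic : ∫ x in Set.Iic t, phi x * Real.sign (x - t) = ∫ x in Set.Iic t, -phi x := by
    refine setIntegral_congr_ae measurableSet_Iic ?_
    have h0 : ∀ᵐ x : ℝ, x ≠ t := by
      rw [ae_iff]
      have h1 : {x : ℝ | ¬ x ≠ t} = {t} := by ext x; simp
      rw [h1]; exact Real.volume_singleton
    filter_upwards [h0] with x hx hxt
    rw [Real.sign_of_neg (sub_neg.mpr (lt_of_le_of_ne hxt hx))]
    ring
  have hIoi : ∫ x in Set.Ioi t, phi x * Real.sign (x - t) = ∫ x in Set.Ioi t, phi x := by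
    refine setIntegral_congr_fun measurableSet_Ioi fun x hx => ?_
    rw [Real.sign_of_pos (sub_pos.mpr hx)]
    ring
  have hsplit := intervalIntegral.integral_Iic_add_Ioi (b := t)
    hint.integrableOn hint.integrableOn
  have hsplit2 := intervalIntegral.integral_Iic_add_Ioi (b := t)
    integrable_phi.integrableOn integrable_phi.integrableOn
  rw [integral_phi] at hsplit2
  have hft : (∫ x in Set.Iic t, phi x) - (∫ x in Set.Iic (0:ℝ), phi x)
      = ∫ s in (0:ℝ)..t, phi s :=
    intervalIntegral.integral_Iic_sub_Iic integrable_phi.integrableOn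
      integrable_phi.integrableOn
  rw [Phi_zero] at hft
  rw [← hsplit, hIic, hIoi, integral_neg]
  linarith

lemma gauss_moment {b : ℝ} (hb : 0 < b) (i : ℕ) :
    ∫ x : ℝ, x ^ (2*i) * Real.exp (-b * x ^ 2)
      = (∏ j ∈ range i, (2*(j:ℝ)+1)) / (2*b)^i * Real.sqrt (π / b) := by
  induction i with
  | zero => simpa using integral_gaussian b
  | succ i ih =>
      have hu : ∀ x : ℝ, HasDerivAt (fun x : ℝ => x ^ (2*i+1))
          (((2*i+1 : ℕ) : ℝ) * x ^ (2*i)) x := by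
        intro x
        simpa using hasDerivAt_pow (2*i+1) x
      have hv : ∀ x : ℝ, HasDerivAt (fun x : ℝ => Real.exp (-b * x^2))
          (Real.exp (-b * x^2) * (-b * (2*x))) x := by
        intro x
        have h1 : HasDerivAt (fun x : ℝ => -b * x^2) (-b * (2*x)) x := by
          have h2 := (hasDerivAt_pow 2 x).const_mul (-b)
          refine h2.congr_deriv ?_
          push_cast
          ring
        exact h1.exp
      have huv' : Integrable (fun x : ℝ =>
          x ^ (2*i+1) * (Real.exp (-b * x^2) * (-b * (2*x)))) := by
        refine ((integrable_pow_gauss hb (2*i+2)).const_mul (-2*b)).congr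
          (Filter.Eventually.of_forall fun x => ?_)
        ring
      have hu'v : Integrable (fun x : ℝ =>
          (((2*i+1 : ℕ) : ℝ) * x ^ (2*i)) * Real.exp (-b * x^2)) := by
        refine ((integrable_pow_gauss hb (2*i)).const_mul ((2*i+1 : ℕ) : ℝ)).congr
          (Filter.Eventually.of_forall fun x => ?_)
        ring
      have huv : Integrable (fun x : ℝ => x ^ (2*i+1) * Real.exp (-b * x^2)) :=
        integrable_pow_gauss hb (2*i+1)
      have hparts := integral_mul_deriv_eq_deriv_mul_of_integrable (fun x _ => hu x) (fun x _ => hv x) huv' hu'v huv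
      have hL : (∫ x : ℝ, x ^ (2*i+1) * (Real.exp (-b * x^2) * (-b * (2*x))))
          = (-2*b) * ∫ x : ℝ, x ^ (2*(i+1)) * Real.exp (-b * x^2) := by
        rw [← integral_const_mul]
        refine integral_congr_ae (Filter.Eventually.of_forall fun x => ?_)
        ring
      have hR : (∫ x : ℝ, (((2*i+1 : ℕ) : ℝ) * x ^ (2*i)) * Real.exp (-b * x^2))
          = ((2*i+1 : ℕ) : ℝ) * ∫ x : ℝ, x ^ (2*i) * Real.exp (-b * x^2) := by
        rw [← integral_const_mul]
        refine integral_congr_ae (Filter.Eventually.of_forall fun x => ?_)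
        ring
      rw [hL, hR] at hparts
      have hb0 : (2*b) ≠ 0 := by positivity
      have key : ∫ x : ℝ, x ^ (2*(i+1)) * Real.exp (-b * x ^ 2)
          = ((2*i+1 : ℕ) : ℝ)/(2*b) * ∫ x : ℝ, x ^ (2*i) * Real.exp (-b * x ^ 2) := by
        rw [div_mul_eq_mul_div, eq_div_iff hb0]
        push_cast at hparts ⊢
        linarith
      rw [key, ih, prod_range_succ]
      have hb2 : (2*b) ^ i ≠ 0 := by positivity
      push_cast
      field_simp
      ring

lemma gaussianPDFReal_eq_phi (x : ℝ) : gaussianPDFReal 0 1 x = phi x := by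
  simp only [gaussianPDFReal, phi, NNReal.coe_one, mul_one, sub_zero]
  ring_nf

lemma integral_gauss (g : ℝ → ℝ) :
    ∫ x, g x ∂(gaussianReal 0 1) = ∫ x, phi x * g x := by
  rw [gaussianReal_of_var_ne_zero _ one_ne_zero]
  have hmeas : Measurable fun x => Real.toNNReal (gaussianPDFReal 0 1 x) :=
    (measurable_gaussianPDFReal 0 1).real_toNNReal
  have hd : (gaussianPDF 0 1) = fun x =>
      ((fun x => Real.toNNReal (gaussianPDFReal 0 1 x)) x : ℝ≥0∞) := rfl
  rw [hd, integral_withDensity_eq_integral_smul hmeas g]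
  refine integral_congr_ae (Filter.Eventually.of_forall fun x => ?_)
  show (gaussianPDFReal 0 1 x).toNNReal • g x = phi x * g x
  rw [NNReal.smul_def, Real.coe_toNNReal _ (gaussianPDFReal_nonneg 0 1 x), smul_eq_mul,
    gaussianPDFReal_eq_phi]

lemma integrable_gauss_iff (g : ℝ → ℝ) :
    Integrable g (gaussianReal 0 1) ↔ Integrable (fun x => phi x * g x) volume := by
  rw [gaussianReal_of_var_ne_zero _ one_ne_zero]
  have hmeas : Measurable fun x => Real.toNNReal (gaussianPDFReal 0 1 x) :=
    (measurable_gaussianPDFReal 0 1).real_toNNReal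
  have hd : (gaussianPDF 0 1) = fun x =>
      ((fun x => Real.toNNReal (gaussianPDFReal 0 1 x)) x : ℝ≥0∞) := rfl
  rw [hd, integrable_withDensity_iff_integrable_smul hmeas]
  refine integrable_congr (Filter.Eventually.of_forall fun x => ?_)
  show (gaussianPDFReal 0 1 x).toNNReal • g x = phi x * g x
  rw [NNReal.smul_def, Real.coe_toNNReal _ (gaussianPDFReal_nonneg 0 1 x), smul_eq_mul,
    gaussianPDFReal_eq_phi]

end OddMomentsAux

open OddMomentsAux

/-- With `M = cY·sgn(aX + bY − cY)`, `X, Y` independent standard Gaussians, `a > 0`,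
`c > 0`, `β = (c−b)/a`, for every `k ≥ 1`,
`E[M^{2k−1}] = −(2^k (k−1)! c^{2k−1} β / √(2π(1+β²))) Σ_{j=0}^{k−1} ((2j−1)!!/(2j)!!)(1+β²)^{−j}`. -/
theorem odd_moments {Ω : Type*} [MeasureSpace Ω]
    [IsProbabilityMeasure (ℙ : Measure Ω)]
    (X Y : Ω → ℝ) (hXm : Measurable X) (hYm : Measurable Y)
    (hindep : IndepFun X Y ℙ)
    (hX : Measure.map X ℙ = gaussianReal 0 1)
    (hY : Measure.map Y ℙ = gaussianReal 0 1)
    (a b c β : ℝ) (ha : 0 < a) (hc : 0 < c) (hβ : β = (c - b) / a)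
    (k : ℕ) (hk : 1 ≤ k) :
    ∫ ω, (c * Y ω * Real.sign (a * X ω + b * Y ω - c * Y ω)) ^ (2 * k - 1) ∂ℙ =
      -(2 ^ k * (Nat.factorial (k - 1) : ℝ) * c ^ (2 * k - 1) * β /
          Real.sqrt (2 * Real.pi * (1 + β ^ 2))) *
        ∑ j ∈ Finset.range k,
          ((∏ i ∈ Finset.range j, (2 * (i : ℝ) + 1)) / (2 ^ j * (Nat.factorial j : ℝ))) *
            ((1 + β ^ 2) ^ j)⁻¹ := by
  obtain ⟨m, rfl⟩ : ∃ m, k = m + 1 := ⟨k - 1, (Nat.succ_pred_eq_of_pos hk).symm⟩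
  have hexp : 2 * (m+1) - 1 = 2*m+1 := by omega
  have hk1 : (m+1) - 1 = m := by omega
  rw [hexp, hk1]
  set γ := gaussianReal 0 1 with hγ
  set F : ℝ × ℝ → ℝ :=
    fun p => (c * p.2 * Real.sign (a * p.1 + b * p.2 - c * p.2)) ^ (2*m+1) with hF
  have hFmeas : Measurable F := by
    apply Measurable.pow_const
    exact (measurable_const.mul measurable_snd).mul
      (measurable_real_sign.comp
        (((measurable_fst.const_mul a).add (measurable_snd.const_mul b)).sub
          (measurable_snd.const_mul c)))
  have hmap : Measure.map (fun ω => (X ω, Y ω)) ℙ = γ.prod γ := by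
    have h := (indepFun_iff_map_prod_eq_prod_map_map hXm.aemeasurable hYm.aemeasurable).mp hindep
    rw [hX, hY] at h
    exact h
  have haβ : a * β = c - b := by
    rw [hβ]; field_simp
  have hFeq : ∀ p : ℝ × ℝ,
      F p = c^(2*m+1) * (p.2^(2*m+1) * Real.sign (p.1 - β*p.2)) := by
    intro p
    have harg : a * p.1 + b * p.2 - c * p.2 = a * (p.1 - β * p.2) := by
      linear_combination p.2 * haβ
    rw [hF]
    simp only []
    rw [harg, sign_pos_mul ha, mul_pow, mul_pow, sign_odd_pow]
    ring
  -- integrability of F on the product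
  have hb2 : (0:ℝ) < (1+β^2)/2 := by positivity
  have hhalf : (0:ℝ) < 1/2 := by norm_num
  have hg1 : Integrable (fun y : ℝ => c^(2*m+1) * |y|^(2*m+1)) γ := by
    rw [hγ, integrable_gauss_iff]
    refine ((integrable_abs_pow_gauss hhalf (2*m+1)).const_mul
      (c^(2*m+1) * (Real.sqrt (2*π))⁻¹)).congr (Filter.Eventually.of_forall fun y => ?_)
    unfold phi
    ring
  have hsnd : Measure.map Prod.snd (γ.prod γ) = γ := by
    have h := Measure.snd_prod (μ := γ) (ν := γ)
    simpa [Measure.snd] using h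
  have hg : Integrable (fun p : ℝ × ℝ => c^(2*m+1) * |p.2|^(2*m+1)) (γ.prod γ) := by
    rw [← hsnd] at hg1
    exact (integrable_map_measure hg1.aestronglyMeasurable
      measurable_snd.aemeasurable).mp hg1
  have hFint : Integrable F (γ.prod γ) := by
    refine Integrable.mono' hg hFmeas.aestronglyMeasurable
      (Filter.Eventually.of_forall fun p => ?_)
    have hle : |c * p.2 * Real.sign (a * p.1 + b * p.2 - c * p.2)| ≤ c * |p.2| := by
      rw [abs_mul, abs_mul, abs_of_pos hc]
      calc c * |p.2| * |Real.sign (a * p.1 + b * p.2 - c * p.2)| ≤ c * |p.2| * 1 := by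
            exact mul_le_mul_of_nonneg_left (abs_sign_le _) (by positivity)
      _ = c * |p.2| := mul_one _
    calc ‖F p‖ = |c * p.2 * Real.sign (a * p.1 + b * p.2 - c * p.2)|^(2*m+1) := by
          rw [hF, Real.norm_eq_abs, abs_pow]
    _ ≤ (c * |p.2|)^(2*m+1) := pow_le_pow_left₀ (abs_nonneg _) hle _
    _ = c^(2*m+1) * |p.2|^(2*m+1) := mul_pow _ _ _
  -- step 1 : transfer to product measure
  have hstep1 : (∫ ω, (c * Y ω * Real.sign (a * X ω + b * Y ω - c * Y ω)) ^ (2*m+1) ∂ℙ)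
      = ∫ p, F p ∂(γ.prod γ) := by
    rw [← hmap, integral_map (hXm.prodMk hYm).aemeasurable hFmeas.aestronglyMeasurable]
  -- step 2 : Fubini
  have hstep2 : (∫ p, F p ∂(γ.prod γ)) = ∫ y, (∫ x, F (x, y) ∂γ) ∂γ :=
    integral_prod_symm F hFint
  -- step 3 : inner integral
  have hinner : ∀ y : ℝ, (∫ x, F (x, y) ∂γ) = c^(2*m+1) * (y^(2*m+1) * uu β y) := by
    intro y
    have h1 : (fun x : ℝ => F (x, y))
        = fun x => c^(2*m+1) * (y^(2*m+1) * Real.sign (x - β*y)) :=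
      funext fun x => hFeq (x, y)
    rw [h1]
    simp_rw [integral_const_mul]
    congr 1
    congr 1
    rw [hγ, integral_gauss, sign_int]
    rw [uu]
  -- step 4 : outer integral
  rw [hstep1, hstep2]
  calc (∫ y, (∫ x, F (x, y) ∂γ) ∂γ)
      = ∫ y, c^(2*m+1) * (y^(2*m+1) * uu β y) ∂γ := by
        exact integral_congr_ae (Filter.Eventually.of_forall fun y => hinner y)
  _ = ∫ y, phi y * (c^(2*m+1) * (y^(2*m+1) * uu β y)) := by rw [hγ, integral_gauss]
  _ = (c^(2*m+1) * (Real.sqrt (2*π))⁻¹) *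
        ∫ y, uu β y * (y^(2*m+1) * Real.exp (-(1/2) * y^2)) := by
        rw [← integral_const_mul]
        refine integral_congr_ae (Filter.Eventually.of_forall fun y => ?_)
        unfold phi
        ring
  _ = (c^(2*m+1) * (Real.sqrt (2*π))⁻¹) * (-2*β*(Real.sqrt (2*π))⁻¹ *
        ∑ i ∈ range (m+1),
          ((2:ℝ)^m * (Nat.factorial m : ℝ) / ((2:ℝ)^i * (Nat.factorial i : ℝ))) *
            ∫ x : ℝ, x ^ (2*i) * Real.exp (-((1+β^2)/2) * x^2)) := by
        rw [key_closed β m]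
  _ = -(2 ^ (m+1) * (Nat.factorial m : ℝ) * c ^ (2*m+1) * β /
          Real.sqrt (2 * π * (1 + β ^ 2))) *
        ∑ j ∈ Finset.range (m+1),
          ((∏ i ∈ Finset.range j, (2 * (i : ℝ) + 1)) / (2 ^ j * (Nat.factorial j : ℝ))) *
            ((1 + β ^ 2) ^ j)⁻¹ := by
        simp only [gauss_moment hb2]
        have hS : Real.sqrt (π / ((1+β^2)/2)) = Real.sqrt (2*π) / Real.sqrt (1+β^2) := by
          rw [show π / ((1+β^2)/2) = (2*π) / (1+β^2) by rw [div_div_eq_mul_div]; ring]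
          exact Real.sqrt_div (by positivity) _
        have hM : Real.sqrt (2*π*(1+β^2)) = Real.sqrt (2*π) * Real.sqrt (1+β^2) :=
          Real.sqrt_mul (by positivity) _
        rw [hS, show (2*((1+β^2)/2)) = 1+β^2 by ring, hM,
          Finset.mul_sum, Finset.mul_sum, Finset.mul_sum]
        refine Finset.sum_congr rfl fun i hi => ?_
        have h1 : Real.sqrt (2*π) ≠ 0 := by positivity
        have h2 : Real.sqrt (1+β^2) ≠ 0 := by positivity
        have h3 : ((1:ℝ)+β^2)^i ≠ 0 := by positivity
        have h4 : ((2:ℝ))^i ≠ 0 := by positivity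
        have h5 : ((Nat.factorial i : ℝ)) ≠ 0 := by exact_mod_cast Nat.factorial_ne_zero i
        field_simp
        ring
end

section
/- For every k ≥ 1 and β ∈ ℝ, ∫_ℝ Φ(β y) y^{2k−1} φ(y) dy = (2^{k−1}(k−1)! β / √(2π(1+β²))) · Σ_{j=0}^{k−1} ((2j−1)!!/(2j)!!) (1+β²)^{−j}. -/
open MeasureTheory Real Finset

namespace AuxGauss

lemma integrable_congr' {f g : ℝ → ℝ} (h : Integrable f) (hfg : ∀ x, f x = g x) :
    Integrable g := (funext hfg : f = g) ▸ h

lemma congr_int (f g : ℝ → ℝ) (h : ∀ x, f x = g x) : ∫ x, f x = ∫ x, g x := by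
  rw [funext h]

lemma stdPdf_eq (x : ℝ) :
    stdPdf x = (Real.sqrt (2 * Real.pi))⁻¹ * Real.exp (-(2⁻¹) * x ^ 2) := by
  unfold stdPdf; ring_nf

lemma stdPdf_nonneg (x : ℝ) : 0 ≤ stdPdf x := by
  unfold stdPdf; positivity

lemma stdPdf_le (x : ℝ) : stdPdf x ≤ (Real.sqrt (2 * Real.pi))⁻¹ := by
  unfold stdPdf
  have h1 : Real.exp (-x ^ 2 / 2) ≤ 1 := by
    rw [Real.exp_le_one_iff]; nlinarith [sq_nonneg x]
  have h2 : (0:ℝ) ≤ (Real.sqrt (2 * Real.pi))⁻¹ := by positivity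
  nlinarith

lemma continuous_stdPdf : Continuous stdPdf := by
  unfold stdPdf; continuity

lemma integrable_pow_mul_exp (n : ℕ) {b : ℝ} (hb : 0 < b) :
    Integrable (fun x : ℝ => x ^ n * Real.exp (-b * x ^ 2)) := by
  have h : (-1:ℝ) < n := lt_of_lt_of_le neg_one_lt_zero (Nat.cast_nonneg n)
  simpa [Real.rpow_natCast] using integrable_rpow_mul_exp_neg_mul_sq hb h

lemma integrable_pow_mul_stdPdf (n : ℕ) : Integrable (fun x : ℝ => x ^ n * stdPdf x) := by
  refine integrable_congr'
    ((integrable_pow_mul_exp n (b := 2⁻¹) (by norm_num)).const_mul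
      ((Real.sqrt (2 * Real.pi))⁻¹)) fun x => ?_
  rw [stdPdf_eq]; ring

lemma integrable_stdPdf : Integrable stdPdf := by
  simpa using integrable_pow_mul_stdPdf 0

lemma stdCdf_nonneg (x : ℝ) : 0 ≤ stdCdf x :=
  setIntegral_nonneg measurableSet_Iic fun t _ => stdPdf_nonneg t

lemma integral_stdPdf : ∫ x, stdPdf x = 1 := by
  have h : ∫ x : ℝ, stdPdf x
      = (Real.sqrt (2 * Real.pi))⁻¹ * ∫ x : ℝ, Real.exp (-(2⁻¹) * x ^ 2) := by
    rw [← integral_const_mul]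
    exact congr_int _ _ fun x => stdPdf_eq x
  rw [h, integral_gaussian]
  rw [show Real.pi / 2⁻¹ = 2 * Real.pi by ring]
  exact inv_mul_cancel₀ (by positivity)

lemma stdCdf_le_one (x : ℝ) : stdCdf x ≤ 1 := by
  rw [← integral_stdPdf]
  exact setIntegral_le_integral integrable_stdPdf
    (Filter.Eventually.of_forall fun t => stdPdf_nonneg t)

lemma hasDerivAt_stdCdf (x : ℝ) : HasDerivAt stdCdf (stdPdf x) x := by
  have h1 : ∀ y : ℝ, stdCdf y = stdCdf 0 + ∫ t in (0:ℝ)..y, stdPdf t := by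
    intro y
    rw [← intervalIntegral.integral_Iic_sub_Iic integrable_stdPdf.integrableOn
      integrable_stdPdf.integrableOn]
    unfold stdCdf; ring
  rw [funext h1]
  exact ((continuous_stdPdf.integral_hasStrictDerivAt 0 x).hasDerivAt).const_add _

lemma continuous_stdCdf : Continuous stdCdf :=
  continuous_iff_continuousAt.2 fun x => (hasDerivAt_stdCdf x).continuousAt

lemma hasDerivAt_stdPdf (x : ℝ) : HasDerivAt stdPdf (-x * stdPdf x) x := by
  have h : HasDerivAt (fun y : ℝ => -y ^ 2 / 2) (-x) x := by
    have := ((hasDerivAt_pow 2 x).neg).div_const 2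
    refine this.congr_deriv ?_
    push_cast; ring
  have h2 := (h.exp).const_mul (Real.sqrt (2 * Real.pi))⁻¹
  refine h2.congr_deriv ?_
  unfold stdPdf; ring

lemma integrable_cdf_mul (β : ℝ) (n : ℕ) :
    Integrable (fun y : ℝ => stdCdf (β * y) * (y ^ n * stdPdf y)) := by
  refine Integrable.bdd_mul (c := 1) (integrable_pow_mul_stdPdf n) ?_ (Filter.Eventually.of_forall fun y => ?_)
  · exact (continuous_stdCdf.comp (continuous_const.mul continuous_id)).aestronglyMeasurable
  · rw [Real.norm_eq_abs, abs_of_nonneg (stdCdf_nonneg _)]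
    exact stdCdf_le_one _

lemma integrable_pdf_mul (β : ℝ) (n : ℕ) :
    Integrable (fun y : ℝ => stdPdf (β * y) * (y ^ n * stdPdf y)) := by
  refine Integrable.bdd_mul (c := (Real.sqrt (2 * Real.pi))⁻¹) (integrable_pow_mul_stdPdf n) ?_
    (Filter.Eventually.of_forall fun y => ?_)
  · exact (continuous_stdPdf.comp (continuous_const.mul continuous_id)).aestronglyMeasurable
  · rw [Real.norm_eq_abs, abs_of_nonneg (stdPdf_nonneg _)]
    exact stdPdf_le _


lemma integral_pow_mul_exp_eq (m : ℕ) {c : ℝ} (hc : 0 < c) :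
    ∫ x : ℝ, x ^ (2 * m) * Real.exp (-c * x ^ 2)
      = (∏ i ∈ range m, (2 * (i : ℝ) + 1)) / (2 * c) ^ m * Real.sqrt (π / c) := by
  induction m with
  | zero =>
    rw [congr_int _ _ (fun x : ℝ => by ring :
      ∀ x : ℝ, x ^ (2 * 0) * Real.exp (-c * x ^ 2) = Real.exp (-c * x ^ 2)),
      integral_gaussian]
    simp
  | succ m ih =>
    have hu : ∀ x : ℝ, HasDerivAt (fun y : ℝ => y ^ (2 * m + 1))
        (((2 * m + 1 : ℕ) : ℝ) * x ^ (2 * m)) x := by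
      intro x
      simpa using hasDerivAt_pow (2 * m + 1) x
    have hv : ∀ x : ℝ, HasDerivAt (fun y : ℝ => Real.exp (-c * y ^ 2))
        (-(2 * c * x) * Real.exp (-c * x ^ 2)) x := by
      intro x
      have h1 : HasDerivAt (fun y : ℝ => -c * y ^ 2) (-(2 * c * x)) x := by
        have := (hasDerivAt_pow 2 x).const_mul (-c)
        refine this.congr_deriv ?_
        push_cast; ring
      simpa [mul_comm] using h1.exp
    have huv' : Integrable ((fun y : ℝ => y ^ (2 * m + 1)) *
        fun x : ℝ => -(2 * c * x) * Real.exp (-c * x ^ 2)) := by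
      refine integrable_congr' ((integrable_pow_mul_exp (2 * m + 2) hc).const_mul (-(2 * c)))
        fun x => ?_
      simp only [Pi.mul_apply]; ring
    have hu'v : Integrable ((fun x : ℝ => ((2 * m + 1 : ℕ) : ℝ) * x ^ (2 * m)) *
        fun y : ℝ => Real.exp (-c * y ^ 2)) := by
      refine integrable_congr' ((integrable_pow_mul_exp (2 * m) hc).const_mul
        ((2 * m + 1 : ℕ) : ℝ)) fun x => ?_
      simp only [Pi.mul_apply]; ring
    have huv : Integrable ((fun y : ℝ => y ^ (2 * m + 1)) *
        fun y : ℝ => Real.exp (-c * y ^ 2)) := by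
      refine integrable_congr' (integrable_pow_mul_exp (2 * m + 1) hc) fun x => ?_
      simp only [Pi.mul_apply]
    have key := MeasureTheory.integral_mul_deriv_eq_deriv_mul_of_integrable
      (fun x _ => hu x) (fun x _ => hv x) huv' hu'v huv
    have e1 : ∫ x : ℝ, x ^ (2 * m + 1) * (-(2 * c * x) * Real.exp (-c * x ^ 2))
        = (-(2 * c)) * ∫ x : ℝ, x ^ (2 * (m + 1)) * Real.exp (-c * x ^ 2) := by
      rw [← integral_const_mul]
      exact congr_int _ _ fun x => by ring
    have e2 : ∫ x : ℝ, ((2 * m + 1 : ℕ) : ℝ) * x ^ (2 * m) * Real.exp (-c * x ^ 2)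
        = ((2 * m + 1 : ℕ) : ℝ) * ∫ x : ℝ, x ^ (2 * m) * Real.exp (-c * x ^ 2) := by
      rw [← integral_const_mul]
      exact congr_int _ _ fun x => by ring
    rw [e1, e2] at key
    have hkey : ∫ x : ℝ, x ^ (2 * (m + 1)) * Real.exp (-c * x ^ 2)
        = ((2 * m + 1 : ℕ) : ℝ) / (2 * c) * ∫ x : ℝ, x ^ (2 * m) * Real.exp (-c * x ^ 2) := by
      have hc' : (2 : ℝ) * c ≠ 0 := by positivity
      field_simp at key ⊢
      linarith [key]
    rw [hkey, ih, prod_range_succ]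
    have hc' : (2 : ℝ) * c ≠ 0 := by positivity
    push_cast
    field_simp
    ring

lemma pdf_mul_pdf (β y : ℝ) :
    stdPdf (β * y) * stdPdf y
      = (2 * π)⁻¹ * Real.exp (-((1 + β ^ 2) / 2) * y ^ 2) := by
  have e : Real.exp (-(β * y) ^ 2 / 2) * Real.exp (-y ^ 2 / 2)
      = Real.exp (-((1 + β ^ 2) / 2) * y ^ 2) := by
    rw [← Real.exp_add]; congr 1; ring
  have s : ((Real.sqrt (2 * π))⁻¹) * (Real.sqrt (2 * π))⁻¹ = (2 * π)⁻¹ := by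
    rw [← mul_inv, Real.mul_self_sqrt (by positivity)]
  unfold stdPdf
  rw [mul_mul_mul_comm, e, s]

lemma integral_pow_mul_pdf_pdf (β : ℝ) (m : ℕ) :
    ∫ y : ℝ, y ^ (2 * m) * (stdPdf (β * y) * stdPdf y)
      = (∏ i ∈ range m, (2 * (i : ℝ) + 1)) / (1 + β ^ 2) ^ m
          / Real.sqrt (2 * π * (1 + β ^ 2)) := by
  have hb : (0:ℝ) < 1 + β ^ 2 := by positivity
  have hc : (0:ℝ) < (1 + β ^ 2) / 2 := by positivity
  have e1 : ∫ y : ℝ, y ^ (2 * m) * (stdPdf (β * y) * stdPdf y)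
      = (2 * π)⁻¹ * ∫ y : ℝ, y ^ (2 * m) * Real.exp (-((1 + β ^ 2) / 2) * y ^ 2) := by
    rw [← integral_const_mul]
    exact congr_int _ _ fun y => by rw [pdf_mul_pdf]; ring
  rw [e1, integral_pow_mul_exp_eq m hc]
  have h2 : (2 : ℝ) * ((1 + β ^ 2) / 2) = 1 + β ^ 2 := by ring
  rw [h2]
  have key : Real.sqrt (2 * π * (1 + β ^ 2)) * Real.sqrt (π / ((1 + β ^ 2) / 2)) = 2 * π := by
    rw [← Real.sqrt_mul (by positivity)]
    rw [show 2 * π * (1 + β ^ 2) * (π / ((1 + β ^ 2) / 2)) = (2 * π) ^ 2 by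
      field_simp]
    exact Real.sqrt_sq (by positivity)
  have hs : Real.sqrt (2 * π * (1 + β ^ 2)) ≠ 0 := by positivity
  have hpi : (2 : ℝ) * π ≠ 0 := by positivity
  have hbm : ((1 : ℝ) + β ^ 2) ^ m ≠ 0 := by positivity
  have h3 : (2 * π)⁻¹ * Real.sqrt (π / ((1 + β ^ 2) / 2))
      = (Real.sqrt (2 * π * (1 + β ^ 2)))⁻¹ := by
    have hB : Real.sqrt (π / ((1 + β ^ 2) / 2)) = 2 * π / Real.sqrt (2 * π * (1 + β ^ 2)) := by
      rw [eq_div_iff hs]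
      linear_combination key
    rw [hB, div_eq_mul_inv, ← mul_assoc, inv_mul_cancel₀ hpi, one_mul]
  calc (2 * π)⁻¹ * ((∏ i ∈ range m, (2 * (i : ℝ) + 1)) / (1 + β ^ 2) ^ m
          * Real.sqrt (π / ((1 + β ^ 2) / 2)))
      = (∏ i ∈ range m, (2 * (i : ℝ) + 1)) / (1 + β ^ 2) ^ m
          * ((2 * π)⁻¹ * Real.sqrt (π / ((1 + β ^ 2) / 2))) := by ring
    _ = (∏ i ∈ range m, (2 * (i : ℝ) + 1)) / (1 + β ^ 2) ^ m
          * (Real.sqrt (2 * π * (1 + β ^ 2)))⁻¹ := by rw [h3]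
    _ = (∏ i ∈ range m, (2 * (i : ℝ) + 1)) / (1 + β ^ 2) ^ m
          / Real.sqrt (2 * π * (1 + β ^ 2)) := by ring

lemma ibp (β : ℝ) (n : ℕ) :
    ∫ y : ℝ, stdCdf (β * y) * y ^ (n + 1) * stdPdf y
      = β * (∫ y : ℝ, y ^ n * (stdPdf (β * y) * stdPdf y))
        + (n : ℝ) * ∫ y : ℝ, stdCdf (β * y) * y ^ (n - 1) * stdPdf y := by
  have hu : ∀ x : ℝ, HasDerivAt (fun y : ℝ => stdCdf (β * y) * y ^ n)
      (β * stdPdf (β * x) * x ^ n + stdCdf (β * x) * ((n : ℝ) * x ^ (n - 1))) x := by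
    intro x
    have h1 : HasDerivAt (fun y : ℝ => β * y) β x := by
      simpa using (hasDerivAt_id x).const_mul β
    have hc : HasDerivAt (fun y : ℝ => stdCdf (β * y)) (β * stdPdf (β * x)) x := by
      have := (hasDerivAt_stdCdf (β * x)).comp x h1
      exact this.congr_deriv (by ring)
    exact hc.mul (hasDerivAt_pow n x)
  have hv : ∀ x : ℝ, HasDerivAt (fun y : ℝ => -stdPdf y) (x * stdPdf x) x := by
    intro x
    have := (hasDerivAt_stdPdf x).neg
    refine this.congr_deriv ?_; ring
  have huv' : Integrable ((fun y : ℝ => stdCdf (β * y) * y ^ n) *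
      fun x : ℝ => x * stdPdf x) := by
    refine integrable_congr' (integrable_cdf_mul β (n + 1)) fun x => ?_
    simp only [Pi.mul_apply]; ring
  have hu'v : Integrable ((fun x : ℝ => β * stdPdf (β * x) * x ^ n
      + stdCdf (β * x) * ((n : ℝ) * x ^ (n - 1))) * fun y : ℝ => -stdPdf y) := by
    refine integrable_congr' (((integrable_pdf_mul β n).const_mul (-β)).add
      ((integrable_cdf_mul β (n - 1)).const_mul (-(n : ℝ)))) fun x => ?_
    simp only [Pi.mul_apply, Pi.add_apply]; ring
  have huv : Integrable ((fun y : ℝ => stdCdf (β * y) * y ^ n) * fun y : ℝ => -stdPdf y) := by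
    refine integrable_congr' ((integrable_cdf_mul β n).neg) fun x => ?_
    simp only [Pi.mul_apply, Pi.neg_apply]; ring
  have key := MeasureTheory.integral_mul_deriv_eq_deriv_mul_of_integrable (fun x _ => hu x) (fun x _ => hv x) huv' hu'v huv
  have hint1 : Integrable (fun y : ℝ => β * (y ^ n * (stdPdf (β * y) * stdPdf y))) := by
    refine integrable_congr' ((integrable_pdf_mul β n).const_mul β) fun x => ?_
    ring
  have hint2 : Integrable (fun y : ℝ => (n : ℝ) * (stdCdf (β * y) * y ^ (n - 1) * stdPdf y)) := by
    refine integrable_congr' ((integrable_cdf_mul β (n - 1)).const_mul (n : ℝ)) fun x => ?_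
    ring
  calc ∫ y : ℝ, stdCdf (β * y) * y ^ (n + 1) * stdPdf y
      = ∫ y : ℝ, (stdCdf (β * y) * y ^ n) * (y * stdPdf y) :=
        congr_int _ _ fun y => by ring
    _ = -∫ y : ℝ, (β * stdPdf (β * y) * y ^ n
          + stdCdf (β * y) * ((n : ℝ) * y ^ (n - 1))) * (-stdPdf y) := key
    _ = ∫ y : ℝ, β * (y ^ n * (stdPdf (β * y) * stdPdf y))
          + (n : ℝ) * (stdCdf (β * y) * y ^ (n - 1) * stdPdf y) := by
        rw [← integral_neg]
        exact congr_int _ _ fun y => by ring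
    _ = (∫ y : ℝ, β * (y ^ n * (stdPdf (β * y) * stdPdf y)))
          + ∫ y : ℝ, (n : ℝ) * (stdCdf (β * y) * y ^ (n - 1) * stdPdf y) :=
        integral_add hint1 hint2
    _ = β * (∫ y : ℝ, y ^ n * (stdPdf (β * y) * stdPdf y))
          + (n : ℝ) * ∫ y : ℝ, stdCdf (β * y) * y ^ (n - 1) * stdPdf y := by
        rw [integral_const_mul, integral_const_mul]


lemma main (β : ℝ) (m : ℕ) :
    ∫ y : ℝ, stdCdf (β * y) * y ^ (2 * m + 1) * stdPdf y =
      (2 ^ m * (Nat.factorial m : ℝ) * β /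
        Real.sqrt (2 * Real.pi * (1 + β ^ 2))) *
      ∑ j ∈ Finset.range (m + 1),
        ((∏ i ∈ Finset.range j, (2 * (i : ℝ) + 1)) / (2 ^ j * (Nat.factorial j : ℝ))) *
          ((1 + β ^ 2) ^ j)⁻¹ := by
  have hs : Real.sqrt (2 * π * (1 + β ^ 2)) ≠ 0 := by positivity
  have hb : ((1:ℝ) + β ^ 2) ≠ 0 := by positivity
  induction m with
  | zero =>
    have hJ := integral_pow_mul_pdf_pdf β 0
    simp only [Nat.mul_zero, pow_zero, one_mul, prod_range_zero] at hJ
    have h := ibp β 0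
    norm_num at h ⊢
    rw [h, hJ]
    norm_num [Finset.sum_range_one]
    exact (div_eq_mul_inv β _).symm
  | succ m ih =>
    have h := ibp β (2 * m + 2)
    have e : 2 * m + 2 - 1 = 2 * m + 1 := by omega
    rw [e, ih] at h
    have hJ := integral_pow_mul_pdf_pdf β (m + 1)
    have e2 : 2 * (m + 1) = 2 * m + 2 := by ring
    rw [e2] at hJ
    rw [hJ] at h
    have e3 : 2 * (m + 1) + 1 = 2 * m + 2 + 1 := by ring
    rw [e3, h, Finset.sum_range_succ (n := m + 1)]
    have hfac : (Nat.factorial m : ℝ) ≠ 0 := Nat.cast_ne_zero.2 m.factorial_ne_zero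
    have hbm : ((1:ℝ) + β ^ 2) ^ (m + 1) ≠ 0 := pow_ne_zero _ hb
    set s := Real.sqrt (2 * π * (1 + β ^ 2)) with hsdef
    set S := ∑ j ∈ Finset.range (m + 1),
        ((∏ i ∈ Finset.range j, (2 * (i : ℝ) + 1)) / (2 ^ j * (Nat.factorial j : ℝ))) *
          ((1 + β ^ 2) ^ j)⁻¹ with hSdef
    set P := ∏ i ∈ Finset.range (m + 1), (2 * (i : ℝ) + 1) with hPdef
    clear_value s S P
    push_cast [Nat.factorial_succ]
    field_simp
    ring

end AuxGauss

/-- For `k ≥ 1` and `β ∈ ℝ`,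
`∫_ℝ Φ(β y) y^{2k-1} φ(y) dy
  = (2^{k-1}(k-1)! β / √(2π(1+β²))) Σ_{j=0}^{k-1} ((2j-1)!!/(2j)!!)(1+β²)^{-j}`. -/
theorem integral_cdf_mul_odd_pow_mul_pdf (k : ℕ) (hk : 1 ≤ k) (β : ℝ) :
    ∫ y : ℝ, stdCdf (β * y) * y ^ (2 * k - 1) * stdPdf y =
      (2 ^ (k - 1) * (Nat.factorial (k - 1) : ℝ) * β /
        Real.sqrt (2 * Real.pi * (1 + β ^ 2))) *
      ∑ j ∈ Finset.range k,
        ((∏ i ∈ Finset.range j, (2 * (i : ℝ) + 1)) / (2 ^ j * (Nat.factorial j : ℝ))) *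
          ((1 + β ^ 2) ^ j)⁻¹ := by
  obtain ⟨m, rfl⟩ : ∃ m, k = m + 1 := ⟨k - 1, by omega⟩
  rw [show 2 * (m + 1) - 1 = 2 * m + 1 from by omega, Nat.add_sub_cancel]
  exact AuxGauss.main β m
end

section
/- For every b ∈ ℝ and y ∈ ℝ, ∫_{−∞}^{y} Φ(b x) φ(x) dx = Φ₂(y, 0; −b/√(1+b²)), where Φ₂(·,·;ρ) is the cumulative distribution function of the centered bivariate Gaussian with unit variances and correlation ρ. -/
open MeasureTheory Real

/-- Density of the centered bivariate Gaussian with unit variances and correlation `ρ`. -/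
noncomputable def biPdf (ρ x y : ℝ) : ℝ :=
  (2 * Real.pi * Real.sqrt (1 - ρ ^ 2))⁻¹ *
    Real.exp (-(x ^ 2 - 2 * ρ * x * y + y ^ 2) / (2 * (1 - ρ ^ 2)))

/-- Distribution function of the centered bivariate Gaussian with unit variances and
correlation `ρ`. -/
noncomputable def biCdf (u v ρ : ℝ) : ℝ :=
  ∫ x in Set.Iic u, ∫ y in Set.Iic v, biPdf ρ x y

/-- Affine substitution in an integral over `Iic`. -/
lemma integral_Iic_affine {σ : ℝ} (hσ : 0 < σ) (μ v : ℝ) (g : ℝ → ℝ) :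
    ∫ t in Set.Iic v, g t = ∫ s in Set.Iic ((v - μ) / σ), σ * g (σ * s + μ) := by
  have himg : (fun s : ℝ => σ * s + μ) '' Set.Iic ((v - μ) / σ) = Set.Iic v := by
    ext t
    simp only [Set.mem_image, Set.mem_Iic]
    constructor
    · rintro ⟨s, hs, rfl⟩
      rw [le_div_iff₀ hσ] at hs
      nlinarith
    · intro ht
      refine ⟨(t - μ) / σ, by gcongr, ?_⟩
      field_simp
      ring
  have hderiv : ∀ x ∈ Set.Iic ((v - μ) / σ),
      HasDerivWithinAt (fun s : ℝ => σ * s + μ) σ (Set.Iic ((v - μ) / σ)) x := by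
    intro x _
    simpa using (((hasDerivAt_id x).const_mul σ).add_const μ).hasDerivWithinAt
  have hinj : Set.InjOn (fun s : ℝ => σ * s + μ) (Set.Iic ((v - μ) / σ)) := by
    intro a _ b _ h
    simp only at h
    have : σ * a = σ * b := by linarith
    exact mul_left_cancel₀ hσ.ne' this
  rw [← himg, integral_image_eq_integral_abs_deriv_smul measurableSet_Iic hderiv hinj g]
  simp [abs_of_pos hσ, smul_eq_mul]

/-- For every `b, y ∈ ℝ`, `∫_{−∞}^{y} Φ(b x) φ(x) dx = Φ₂(y, 0; −b/√(1+b²))`. -/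
theorem integral_cdf_pdf_eq_biCdf (b y : ℝ) :
    ∫ x in Set.Iic y, stdCdf (b * x) * stdPdf x =
      biCdf y 0 (-b / Real.sqrt (1 + b ^ 2)) := by
  set c : ℝ := Real.sqrt (1 + b ^ 2) with hc_def
  have hc : 0 < c := Real.sqrt_pos.mpr (by positivity)
  have hc2 : c ^ 2 = 1 + b ^ 2 := Real.sq_sqrt (by positivity)
  have h2pi : (0:ℝ) < 2 * Real.pi := by positivity
  have hsq2pi : Real.sqrt (2 * Real.pi) ^ 2 = 2 * Real.pi := Real.sq_sqrt h2pi.le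
  have hσ : Real.sqrt (1 - (-b / c) ^ 2) = 1 / c := by
    have h1 : 1 - (-b / c) ^ 2 = 1 / c ^ 2 := by
      field_simp
      nlinarith
    rw [h1, one_div, Real.sqrt_inv, Real.sqrt_sq hc.le, one_div]
  unfold biCdf
  refine (setIntegral_congr_fun measurableSet_Iic fun x _ => ?_).symm
  have key : ∀ s : ℝ, (1 / c) * biPdf (-b / c) x ((1 / c) * s + (-b / c) * x)
      = stdPdf x * stdPdf s := by
    intro s
    unfold biPdf stdPdf
    rw [hσ]
    have hcoef : (1 / c) * (2 * Real.pi * (1 / c))⁻¹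
        = (Real.sqrt (2 * Real.pi))⁻¹ * (Real.sqrt (2 * Real.pi))⁻¹ := by
      rw [← mul_inv, Real.mul_self_sqrt h2pi.le, mul_inv]
      field_simp
    have hexp : -(x ^ 2 - 2 * (-b / c) * x * ((1 / c) * s + (-b / c) * x)
          + ((1 / c) * s + (-b / c) * x) ^ 2) / (2 * (1 - (-b / c) ^ 2))
        = -x ^ 2 / 2 + -s ^ 2 / 2 := by
      have h1 : 1 - (-b / c) ^ 2 = 1 / c ^ 2 := by
        field_simp
        nlinarith
      rw [h1]
      field_simp
      linear_combination (-x ^ 2) * hc2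
    rw [hexp, Real.exp_add]
    linear_combination (Real.exp (-x ^ 2 / 2) * Real.exp (-s ^ 2 / 2)) * hcoef
  have hb : ((0 : ℝ) - (-b / c) * x) / (1 / c) = b * x := by
    field_simp
    ring
  rw [integral_Iic_affine (by positivity : (0:ℝ) < 1 / c) ((-b / c) * x) 0, hb]
  simp_rw [key]
  rw [integral_const_mul]
  rw [mul_comm]
  rfl
end

section
/- Let Q be an n×n symmetric positive definite matrix. Then there exists exactly one vector w ∈ ℝⁿ with Σ_k w_k = 1 such that ⟨Qw, w⟩ = ⟨Q_k, w⟩ for all k ∈ {1,…,n}, namely w = (⟨Q⁻¹𝟏, 𝟏⟩)⁻¹ Q⁻¹𝟏. -/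
open Matrix

/-- For a symmetric positive definite `Q` there is exactly one vector `w` with
`Σ_k w_k = 1` such that `⟨Qw, w⟩ = ⟨Q_k, w⟩` for all `k`, namely
`w = ⟨Q⁻¹𝟏,𝟏⟩⁻¹ · Q⁻¹𝟏`. -/
theorem unique_equilibrium_weights {n : ℕ} [NeZero n]
    (Q : Matrix (Fin n) (Fin n) ℝ) (hQ : Q.PosDef) :
    let wstar : Fin n → ℝ :=
      (∑ i, Q⁻¹.mulVec (fun _ => 1) i)⁻¹ • Q⁻¹.mulVec (fun _ => 1)
    ((∑ k, wstar k = 1) ∧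
      (∀ k, ∑ i, ∑ j, wstar i * Q i j * wstar j = ∑ j, Q k j * wstar j)) ∧
    (∀ w : Fin n → ℝ,
      (∑ k, w k = 1) →
      (∀ k, ∑ i, ∑ j, w i * Q i j * w j = ∑ j, Q k j * w j) →
      w = wstar) := by
  intro wstar
  have hdet : IsUnit Q.det := isUnit_iff_ne_zero.mpr hQ.det_pos.ne'
  set u : Fin n → ℝ := Q⁻¹.mulVec (fun _ => 1) with hu
  set s : ℝ := ∑ i, u i with hs
  have hws : wstar = s⁻¹ • u := rfl
  have hQu : Q.mulVec u = fun _ => 1 := by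
    rw [hu, Matrix.mulVec_mulVec, Matrix.mul_nonsing_inv Q hdet, Matrix.one_mulVec]
  have hspos : 0 < s := by
    have h1 : (fun _ : Fin n => (1:ℝ)) ≠ 0 := by
      intro h
      have := congrFun h ⟨0, Nat.pos_of_ne_zero (NeZero.ne n)⟩
      simp at this
    have h2 := (hQ.inv).dotProduct_mulVec_pos (x := fun _ => 1) h1
    simpa [dotProduct, hs, hu] using h2
  have hsne : s ≠ 0 := hspos.ne'
  have hwsum : ∑ k, wstar k = 1 := by
    rw [hws]
    simp only [Pi.smul_apply, smul_eq_mul, ← Finset.mul_sum, ← hs]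
    exact inv_mul_cancel₀ hsne
  have hQw : Q.mulVec wstar = fun _ => s⁻¹ := by
    rw [hws, Matrix.mulVec_smul, hQu]
    funext k; simp
  have hQwk : ∀ k, ∑ j, Q k j * wstar j = s⁻¹ := fun k => congrFun hQw k
  refine ⟨⟨hwsum, fun k => ?_⟩, ?_⟩
  · rw [hQwk k]
    calc ∑ i, ∑ j, wstar i * Q i j * wstar j
        = ∑ i, wstar i * ∑ j, Q i j * wstar j := by
          simp [Finset.mul_sum, mul_assoc]
      _ = ∑ i, wstar i * s⁻¹ := by simp_rw [hQwk]
      _ = s⁻¹ := by rw [← Finset.sum_mul, hwsum, one_mul]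
  · intro w hw1 hw2
    set c : ℝ := ∑ i, ∑ j, w i * Q i j * w j with hc
    have hQwv : Q.mulVec w = fun _ => c := by
      funext k
      have := hw2 k
      simpa [Matrix.mulVec, dotProduct] using this.symm
    have hwc : w = c • u := by
      have h3 : Q⁻¹.mulVec (Q.mulVec w) = w := by
        rw [Matrix.mulVec_mulVec, Matrix.nonsing_inv_mul Q hdet, Matrix.one_mulVec]
      rw [← h3, hQwv, hu]
      have : (fun _ : Fin n => c) = c • (fun _ : Fin n => (1:ℝ)) := by
        funext k; simp
      rw [this, Matrix.mulVec_smul]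
    have hcs : c * s = 1 := by
      rw [← hw1, hwc]
      simp [hs, Finset.mul_sum]
    have hceq : c = s⁻¹ := by
      field_simp at hcs ⊢
      linarith [hcs]
    rw [hwc, hceq, hws]
end

section
/- Fix w₁ ∈ (0,1), σ_r > 0 and ρ ∈ [−1, 0]. Define μ(σ₁) = −√(2/π) · (w₁(1−w₁)σ₁² − σ_r² + (1−2w₁)ρ σ_r σ₁) / √((1−w₁)²σ₁² + σ_r² − 2(1−w₁)ρ σ_r σ₁) for σ₁ > 0. Then μ is strictly decreasing on (0, ∞). -/
open Real

/-- For `w₁ ∈ (0,1)`, `σ_r > 0`, `ρ ∈ [−1,0]`, the expected payoff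
`μ(σ₁) = −√(2/π)(w₁(1−w₁)σ₁² − σ_r² + (1−2w₁)ρσ_rσ₁)/√((1−w₁)²σ₁² + σ_r² − 2(1−w₁)ρσ_rσ₁)`
is strictly decreasing on `(0, ∞)`. -/
theorem payoff_strictAnti (w₁ σr ρ : ℝ) (hw : w₁ ∈ Set.Ioo (0 : ℝ) 1)
    (hσr : 0 < σr) (hρ : ρ ∈ Set.Icc (-1 : ℝ) 0) :
    StrictAntiOn (fun σ₁ : ℝ =>
      -Real.sqrt (2 / Real.pi) *
        (w₁ * (1 - w₁) * σ₁ ^ 2 - σr ^ 2 + (1 - 2 * w₁) * ρ * σr * σ₁) /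
        Real.sqrt ((1 - w₁) ^ 2 * σ₁ ^ 2 + σr ^ 2 - 2 * (1 - w₁) * ρ * σr * σ₁))
      (Set.Ioi 0) := by
  obtain ⟨hw0, hw1⟩ := hw
  obtain ⟨hρ1, hρ0⟩ := hρ
  set k := Real.sqrt (2 / Real.pi) with hk
  have hkpos : 0 < k := Real.sqrt_pos.mpr (by positivity)
  -- Q positive on Ioi 0
  have hQpos : ∀ x : ℝ, 0 < x →
      0 < (1 - w₁) ^ 2 * x ^ 2 + σr ^ 2 - 2 * (1 - w₁) * ρ * σr * x := by
    intro x hx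
    have h1 : 0 ≤ -ρ := by linarith
    nlinarith [sq_nonneg ((1 - w₁) * x), mul_pos hσr hx, sq_nonneg σr,
      mul_nonneg (mul_nonneg (by linarith : (0:ℝ) ≤ 1 - w₁) h1) (mul_pos hσr hx).le]
  -- derivative of f at each point of Ioi 0
  have hderiv : ∀ x : ℝ, 0 < x → HasDerivAt (fun σ₁ : ℝ =>
      -k * (w₁ * (1 - w₁) * σ₁ ^ 2 - σr ^ 2 + (1 - 2 * w₁) * ρ * σr * σ₁) /
        Real.sqrt ((1 - w₁) ^ 2 * σ₁ ^ 2 + σr ^ 2 - 2 * (1 - w₁) * ρ * σr * σ₁))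
      ((-k * (2 * (w₁ * (1 - w₁)) * x + (1 - 2 * w₁) * ρ * σr) *
          Real.sqrt ((1 - w₁) ^ 2 * x ^ 2 + σr ^ 2 - 2 * (1 - w₁) * ρ * σr * x) -
        -k * (w₁ * (1 - w₁) * x ^ 2 - σr ^ 2 + (1 - 2 * w₁) * ρ * σr * x) *
          ((2 * (1 - w₁) ^ 2 * x - 2 * (1 - w₁) * ρ * σr) /
            (2 * Real.sqrt ((1 - w₁) ^ 2 * x ^ 2 + σr ^ 2 - 2 * (1 - w₁) * ρ * σr * x)))) /
        Real.sqrt ((1 - w₁) ^ 2 * x ^ 2 + σr ^ 2 - 2 * (1 - w₁) * ρ * σr * x) ^ 2) x := by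
    intro x hx
    have hQx := hQpos x hx
    have hQne : (1 - w₁) ^ 2 * x ^ 2 + σr ^ 2 - 2 * (1 - w₁) * ρ * σr * x ≠ 0 := ne_of_gt hQx
    have hN : HasDerivAt (fun σ₁ : ℝ =>
        w₁ * (1 - w₁) * σ₁ ^ 2 - σr ^ 2 + (1 - 2 * w₁) * ρ * σr * σ₁)
        (2 * (w₁ * (1 - w₁)) * x + (1 - 2 * w₁) * ρ * σr) x := by
      have h1 : HasDerivAt (fun σ₁ : ℝ => σ₁ ^ 2) (2 * x) x := by
        simpa using hasDerivAt_pow 2 x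
      have h2 := ((h1.const_mul (w₁ * (1 - w₁))).sub_const (σr ^ 2)).add
        ((hasDerivAt_id x).const_mul ((1 - 2 * w₁) * ρ * σr))
      convert h2 using 1
      · rfl
      · rfl
      · funext y; simp only [Pi.add_apply, Pi.sub_apply, id]
      · ring
    have hQ : HasDerivAt (fun σ₁ : ℝ =>
        (1 - w₁) ^ 2 * σ₁ ^ 2 + σr ^ 2 - 2 * (1 - w₁) * ρ * σr * σ₁)
        (2 * (1 - w₁) ^ 2 * x - 2 * (1 - w₁) * ρ * σr) x := by
      have h1 : HasDerivAt (fun σ₁ : ℝ => σ₁ ^ 2) (2 * x) x := by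
        simpa using hasDerivAt_pow 2 x
      have h2 := ((h1.const_mul ((1 - w₁) ^ 2)).add_const (σr ^ 2)).sub
        ((hasDerivAt_id x).const_mul (2 * (1 - w₁) * ρ * σr))
      convert h2 using 1
      · rfl
      · rfl
      · funext y; simp only [Pi.add_apply, Pi.sub_apply, id]
      · ring
    have hsq := hQ.sqrt hQne
    have hsqne : Real.sqrt ((1 - w₁) ^ 2 * x ^ 2 + σr ^ 2 - 2 * (1 - w₁) * ρ * σr * x) ≠ 0 :=
      ne_of_gt (Real.sqrt_pos.mpr hQx)
    exact (hN.const_mul (-k)).div hsq hsqne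
  have key : ∀ x : ℝ, 0 < x →
      0 < 2 * (2 * (w₁ * (1 - w₁)) * x + (1 - 2 * w₁) * ρ * σr) *
            ((1 - w₁) ^ 2 * x ^ 2 + σr ^ 2 - 2 * (1 - w₁) * ρ * σr * x) -
          (w₁ * (1 - w₁) * x ^ 2 - σr ^ 2 + (1 - 2 * w₁) * ρ * σr * x) *
            (2 * (1 - w₁) ^ 2 * x - 2 * (1 - w₁) * ρ * σr) := by
    intro x hx
    have ha : 0 < 1 - w₁ := by linarith
    have h1 : 0 ≤ -ρ := by linarith
    have h2 : ρ ^ 2 ≤ 1 := by nlinarith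
    nlinarith [mul_nonneg (mul_nonneg (pow_pos hσr 3).le h1) hw0.le,
      mul_pos (mul_pos (pow_pos ha 3) (pow_pos hx 3)) hw0,
      mul_nonneg (mul_nonneg (mul_nonneg (mul_nonneg (sq_nonneg (1 - w₁)) hσr.le) h1)
        (sq_nonneg x)) hw0.le,
      mul_pos (mul_pos (mul_pos ha (pow_pos hσr 2)) hx) hw0,
      mul_nonneg (mul_pos (mul_pos ha (pow_pos hσr 2)) hx).le (by nlinarith : (0:ℝ) ≤ 1 - ρ ^ 2),
      mul_nonneg (mul_nonneg (mul_pos (mul_pos ha (pow_pos hσr 2)) hx).le (sq_nonneg ρ)) hw0.le]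
  apply strictAntiOn_of_deriv_neg (convex_Ioi (0 : ℝ))
  · intro x hx
    exact (hderiv x hx).continuousAt.continuousWithinAt
  · intro x hx
    rw [interior_Ioi] at hx
    have hx' : 0 < x := hx
    rw [(hderiv x hx').deriv]
    have hQx := hQpos x hx'
    set u := Real.sqrt ((1 - w₁) ^ 2 * x ^ 2 + σr ^ 2 - 2 * (1 - w₁) * ρ * σr * x) with hu
    have hupos : 0 < u := Real.sqrt_pos.mpr hQx
    have hu2 : u ^ 2 = (1 - w₁) ^ 2 * x ^ 2 + σr ^ 2 - 2 * (1 - w₁) * ρ * σr * x :=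
      Real.sq_sqrt hQx.le
    apply div_neg_of_neg_of_pos _ (by positivity)
    have heq : -k * (2 * (w₁ * (1 - w₁)) * x + (1 - 2 * w₁) * ρ * σr) * u -
        -k * (w₁ * (1 - w₁) * x ^ 2 - σr ^ 2 + (1 - 2 * w₁) * ρ * σr * x) *
          ((2 * (1 - w₁) ^ 2 * x - 2 * (1 - w₁) * ρ * σr) / (2 * u)) =
        -(k * (2 * (2 * (w₁ * (1 - w₁)) * x + (1 - 2 * w₁) * ρ * σr) * u ^ 2 -
            (w₁ * (1 - w₁) * x ^ 2 - σr ^ 2 + (1 - 2 * w₁) * ρ * σr * x) *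
              (2 * (1 - w₁) ^ 2 * x - 2 * (1 - w₁) * ρ * σr))) / (2 * u) := by
      field_simp
      ring
    rw [heq, hu2]
    apply div_neg_of_neg_of_pos _ (by positivity)
    have hk2 := mul_pos hkpos (key x hx')
    linarith
end

section
/- Fix w₁ ∈ (0,1), σ_r > 0 and ρ ∈ (0, 1). Define μ(σ₁) as in the previous statement. Then there exists σ̄ > 0 such that μ is strictly increasing on (0, σ̄] and strictly decreasing on [σ̄, ∞). -/
open Real

/-- For `w₁ ∈ (0,1)`, `σ_r > 0`, `ρ ∈ (0,1)`, there is `σ̄ > 0` such that the expected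
payoff `μ(σ₁)` is strictly increasing on `(0, σ̄]` and strictly decreasing on `[σ̄, ∞)`. -/
theorem payoff_unimodal (w₁ σr ρ : ℝ) (hw : w₁ ∈ Set.Ioo (0 : ℝ) 1)
    (hσr : 0 < σr) (hρ : ρ ∈ Set.Ioo (0 : ℝ) 1) :
    ∃ σbar > (0 : ℝ),
      StrictMonoOn (fun σ₁ : ℝ =>
        -Real.sqrt (2 / Real.pi) *
          (w₁ * (1 - w₁) * σ₁ ^ 2 - σr ^ 2 + (1 - 2 * w₁) * ρ * σr * σ₁) /
          Real.sqrt ((1 - w₁) ^ 2 * σ₁ ^ 2 + σr ^ 2 - 2 * (1 - w₁) * ρ * σr * σ₁))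
        (Set.Ioc 0 σbar) ∧
      StrictAntiOn (fun σ₁ : ℝ =>
        -Real.sqrt (2 / Real.pi) *
          (w₁ * (1 - w₁) * σ₁ ^ 2 - σr ^ 2 + (1 - 2 * w₁) * ρ * σr * σ₁) /
          Real.sqrt ((1 - w₁) ^ 2 * σ₁ ^ 2 + σr ^ 2 - 2 * (1 - w₁) * ρ * σr * σ₁))
        (Set.Ici σbar) := by
  obtain ⟨hw0, hw1⟩ := hw
  obtain ⟨hρ0, hρ1⟩ := hρ
  have hc : 0 < Real.sqrt (2 / Real.pi) := Real.sqrt_pos.2 (by positivity)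
  set c := Real.sqrt (2 / Real.pi) with hcdef
  -- the function and auxiliary polynomials
  set N : ℝ → ℝ := fun s => w₁ * (1 - w₁) * s ^ 2 - σr ^ 2 + (1 - 2 * w₁) * ρ * σr * s
    with hNdef
  set D : ℝ → ℝ := fun s => (1 - w₁) ^ 2 * s ^ 2 + σr ^ 2 - 2 * (1 - w₁) * ρ * σr * s
    with hDdef
  set F : ℝ → ℝ := fun s => -c * N s / Real.sqrt (D s) with hFdef
  have hDpos : ∀ s : ℝ, 0 < D s := by
    intro s
    have h1 : (0:ℝ) < (1 - ρ) * (1 + ρ) * σr ^ 2 :=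
      mul_pos (mul_pos (by linarith) (by linarith)) (by positivity)
    have h2 : (0:ℝ) ≤ ((1 - w₁) * s - ρ * σr) ^ 2 := sq_nonneg _
    simp only [hDdef]
    nlinarith
  -- g = 2 N' D - N D'
  set g : ℝ → ℝ := fun s =>
    2 * w₁ * (1 - w₁) ^ 3 * s ^ 3 - 6 * w₁ * (1 - w₁) ^ 2 * ρ * σr * s ^ 2
      + 2 * σr ^ 2 * (1 - w₁) * (1 + w₁ - ρ ^ 2 * (1 - 2 * w₁)) * s - 2 * w₁ * ρ * σr ^ 3
    with hgdef
  have hgmono : StrictMono g := by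
    apply strictMono_of_deriv_pos
    intro s
    have hd : HasDerivAt g
        (6 * w₁ * (1 - w₁) ^ 3 * s ^ 2 - 12 * w₁ * (1 - w₁) ^ 2 * ρ * σr * s
          + 2 * σr ^ 2 * (1 - w₁) * (1 + w₁ - ρ ^ 2 * (1 - 2 * w₁))) s := by
      have h3 : HasDerivAt (fun x : ℝ => x ^ 3) (3 * s ^ 2) s := by
        simpa using hasDerivAt_pow 3 s
      have h2 : HasDerivAt (fun x : ℝ => x ^ 2) (2 * s) s := by
        simpa using hasDerivAt_pow 2 s
      have := (((h3.const_mul (2 * w₁ * (1 - w₁) ^ 3)).sub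
        (h2.const_mul (6 * w₁ * (1 - w₁) ^ 2 * ρ * σr))).add
        ((hasDerivAt_id s).const_mul (2 * σr ^ 2 * (1 - w₁) * (1 + w₁ - ρ ^ 2 * (1 - 2 * w₁))))).sub_const
        (2 * w₁ * ρ * σr ^ 3)
      refine this.congr_deriv ?_
      ring
    rw [hd.deriv]
    have h1 : (0:ℝ) ≤ 6 * w₁ * (1 - w₁) * ((1 - w₁) * s - ρ * σr) ^ 2 :=
      mul_nonneg (by nlinarith) (sq_nonneg _)
    have h2 : (0:ℝ) < 2 * σr ^ 2 * (1 - w₁) * (1 + w₁) * ((1 - ρ) * (1 + ρ)) :=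
      mul_pos (mul_pos (mul_pos (by positivity) (by linarith)) (by linarith))
        (mul_pos (by linarith) (by linarith))
    nlinarith
  have hg0 : g 0 < 0 := by
    simp only [hgdef]
    have : (0:ℝ) < 2 * w₁ * ρ * σr ^ 3 := by positivity
    nlinarith
  -- a point where g is positive
  set m : ℝ := 2 * σr ^ 2 * (1 - w₁) * (1 + w₁) * ((1 - ρ) * (1 + ρ)) with hmdef
  have hm : 0 < m := by
    rw [hmdef]
    exact mul_pos (mul_pos (mul_pos (by positivity) (by linarith)) (by linarith))
      (mul_pos (by linarith) (by linarith))
  set b : ℝ := (2 * w₁ * ρ * σr ^ 3 + 1) / m with hbdef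
  have hb0 : 0 < b := div_pos (by positivity) hm
  have hmb : m * b = 2 * w₁ * ρ * σr ^ 3 + 1 := by
    rw [hbdef]; field_simp
  have hgb : 0 < g b := by
    have hkey : g b = (- (2 * w₁ * ρ * σr ^ 3)) + m * b
        + (w₁ * (1 - w₁) / 2) * b * ((2 * (1 - w₁) * b - 3 * ρ * σr) ^ 2 + 3 * ρ ^ 2 * σr ^ 2) := by
      simp only [hgdef, hmdef]; ring
    have hnn : (0:ℝ) ≤ (w₁ * (1 - w₁) / 2) * b * ((2 * (1 - w₁) * b - 3 * ρ * σr) ^ 2 + 3 * ρ ^ 2 * σr ^ 2) :=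
      mul_nonneg (mul_nonneg (by nlinarith) hb0.le) (by positivity)
    rw [hkey, hmb]
    linarith
  -- the root
  have hgc : Continuous g := by fun_prop
  obtain ⟨σbar, hσmem, hgσ⟩ : ∃ x ∈ Set.Icc (0:ℝ) b, g x = 0 := by
    have := intermediate_value_Icc hb0.le hgc.continuousOn
    have h0 : (0:ℝ) ∈ Set.Icc (g 0) (g b) := ⟨hg0.le, hgb.le⟩
    exact this h0
  have hσpos : 0 < σbar := by
    rcases lt_or_eq_of_le hσmem.1 with h | h
    · exact h
    · exfalso; rw [← h] at hgσ; linarith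
  -- derivative of F
  have hF' : ∀ s : ℝ, HasDerivAt F (-c * g s / (2 * D s * Real.sqrt (D s))) s := by
    intro s
    have hDs := hDpos s
    have hts : 0 < Real.sqrt (D s) := Real.sqrt_pos.2 hDs
    have h2 : HasDerivAt (fun x : ℝ => x ^ 2) (2 * s) s := by
      simpa using hasDerivAt_pow 2 s
    have hN : HasDerivAt (fun x => -c * N x) (-c * (2 * w₁ * (1 - w₁) * s + (1 - 2 * w₁) * ρ * σr)) s := by
      have := (((h2.const_mul (w₁ * (1 - w₁))).sub_const (σr ^ 2)).add
        ((hasDerivAt_id s).const_mul ((1 - 2 * w₁) * ρ * σr))).const_mul (-c)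
      refine this.congr_deriv ?_
      ring
    have hD : HasDerivAt D (2 * (1 - w₁) ^ 2 * s - 2 * (1 - w₁) * ρ * σr) s := by
      have := ((h2.const_mul ((1 - w₁) ^ 2)).add_const (σr ^ 2)).sub
        ((hasDerivAt_id s).const_mul (2 * (1 - w₁) * ρ * σr))
      refine this.congr_deriv ?_
      ring
    have hsqrt : HasDerivAt (fun x => Real.sqrt (D x))
        ((2 * (1 - w₁) ^ 2 * s - 2 * (1 - w₁) * ρ * σr) / (2 * Real.sqrt (D s))) s := by
      have := (Real.hasDerivAt_sqrt hDs.ne').comp s hD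
      refine this.congr_deriv ?_
      ring
    have hdiv := hN.div hsqrt hts.ne'
    refine hdiv.congr_deriv ?_
    have hsq : Real.sqrt (D s) ^ 2 = D s := Real.sq_sqrt hDs.le
    simp only [hgdef, hNdef, hDdef] at hsq hts ⊢
    generalize Real.sqrt ((1 - w₁) ^ 2 * s ^ 2 + σr ^ 2 - 2 * (1 - w₁) * ρ * σr * s) = t at hsq hts ⊢
    rw [← hsq]
    field_simp
    linear_combination (-2 * (2 * w₁ * (1 - w₁) * s + (1 - 2 * w₁) * ρ * σr)) * hsq
  have hFc : Continuous F := by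
    apply Continuous.div
    · fun_prop
    · fun_prop
    · intro x
      exact (Real.sqrt_pos.2 (hDpos x)).ne'
  refine ⟨σbar, hσpos, ?_, ?_⟩
  · apply strictMonoOn_of_deriv_pos (convex_Ioc 0 σbar) hFc.continuousOn
    intro x hx
    rw [interior_Ioc] at hx
    rw [(hF' x).deriv]
    have hgx : g x < 0 := by
      have := hgmono hx.2
      rw [hgσ] at this
      exact this
    have hnum : 0 < -c * g x := by nlinarith
    have hden : 0 < 2 * D x * Real.sqrt (D x) := by
      have := hDpos x
      have := Real.sqrt_pos.2 (hDpos x)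
      positivity
    exact div_pos hnum hden
  · apply strictAntiOn_of_deriv_neg (convex_Ici σbar) hFc.continuousOn
    intro x hx
    rw [interior_Ici] at hx
    rw [(hF' x).deriv]
    have hgx : 0 < g x := by
      have := hgmono hx
      rw [hgσ] at this
      exact this
    have hnum : -c * g x < 0 := by nlinarith
    have hden : 0 < 2 * D x * Real.sqrt (D x) := by
      have := hDpos x
      have := Real.sqrt_pos.2 (hDpos x)
      positivity
    exact div_neg_of_neg_of_pos hnum hden
end

section
/- Let w₁ ∈ (0,1) and ρ ∈ (−1,1). The cubic polynomial g(x) = w₁(1−w₁)³ x³ − 3w₁(1−w₁)²σ_r ρ x² + σ_r²(1−w₁)((1+2ρ²)w₁ + 1 − ρ²) x − w₁σ_r³ρ (with σ_r > 0) is strictly increasing on ℝ; in particular its derivative 3w₁(1−w₁)³x² − 6w₁(1−w₁)²σ_rρ x + σ_r²(1−w₁)((1+2ρ²)w₁+1−ρ²) has negative discriminant, since the discriminant has the same sign as (1+w₁)(ρ²−1) < 0. -/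
open Real

/-- For `w₁ ∈ (0,1)`, `σ_r > 0`, `ρ ∈ (−1,1)`, the cubic
`g(x) = w₁(1−w₁)³x³ − 3w₁(1−w₁)²σ_rρx² + σ_r²(1−w₁)((1+2ρ²)w₁+1−ρ²)x − w₁σ_r³ρ`
is strictly increasing on `ℝ`, and the discriminant of its derivative is negative. -/
theorem cubic_strictMono (w₁ σr ρ : ℝ) (hw : w₁ ∈ Set.Ioo (0 : ℝ) 1)
    (hσr : 0 < σr) (hρ : ρ ∈ Set.Ioo (-1 : ℝ) 1) :
    StrictMono (fun x : ℝ =>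
      w₁ * (1 - w₁) ^ 3 * x ^ 3 - 3 * w₁ * (1 - w₁) ^ 2 * σr * ρ * x ^ 2 +
        σr ^ 2 * (1 - w₁) * ((1 + 2 * ρ ^ 2) * w₁ + 1 - ρ ^ 2) * x -
        w₁ * σr ^ 3 * ρ) ∧
    (6 * w₁ * (1 - w₁) ^ 2 * σr * ρ) ^ 2 -
        4 * (3 * w₁ * (1 - w₁) ^ 3) *
          (σr ^ 2 * (1 - w₁) * ((1 + 2 * ρ ^ 2) * w₁ + 1 - ρ ^ 2)) < 0 := by
  obtain ⟨hw0, hw1⟩ := hw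
  obtain ⟨hρ0, hρ1⟩ := hρ
  have h1w : (0:ℝ) < 1 - w₁ := by linarith
  have hρ2 : ρ ^ 2 < 1 := by nlinarith
  constructor
  · apply strictMono_of_deriv_pos
    intro x
    have hd : HasDerivAt (fun x : ℝ =>
        w₁ * (1 - w₁) ^ 3 * x ^ 3 - 3 * w₁ * (1 - w₁) ^ 2 * σr * ρ * x ^ 2 +
          σr ^ 2 * (1 - w₁) * ((1 + 2 * ρ ^ 2) * w₁ + 1 - ρ ^ 2) * x -
          w₁ * σr ^ 3 * ρ)
        (w₁ * (1 - w₁) ^ 3 * (3 * x ^ 2) -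
          3 * w₁ * (1 - w₁) ^ 2 * σr * ρ * (2 * x) +
          σr ^ 2 * (1 - w₁) * ((1 + 2 * ρ ^ 2) * w₁ + 1 - ρ ^ 2)) x := by
      have := (((hasDerivAt_pow 3 x).const_mul (w₁ * (1 - w₁) ^ 3)).sub
        ((hasDerivAt_pow 2 x).const_mul (3 * w₁ * (1 - w₁) ^ 2 * σr * ρ))).add
        ((hasDerivAt_id x).const_mul (σr ^ 2 * (1 - w₁) * ((1 + 2 * ρ ^ 2) * w₁ + 1 - ρ ^ 2)))
      have := this.sub_const (w₁ * σr ^ 3 * ρ)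
      refine this.congr_deriv ?_
      ring
    rw [hd.deriv]
    nlinarith [sq_nonneg ((1 - w₁) * x - σr * ρ), mul_pos hw0 h1w, sq_nonneg σr,
      mul_pos (mul_pos (mul_pos (mul_pos hσr hσr) h1w) (by linarith : (0:ℝ) < 1 + w₁))
        (by linarith : (0:ℝ) < 1 - ρ ^ 2)]
  · have key : (0:ℝ) < w₁ * (1 - w₁) ^ 4 * σr ^ 2 * ((1 + w₁) * (1 - ρ ^ 2)) := by
      have : (0:ℝ) < (1 + w₁) * (1 - ρ ^ 2) := by nlinarith
      positivity
    nlinarith [key]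
end

section
/- Let w₁ ∈ (0,1) and ρ ∈ (0,1]. For any σ₁ > 0, the cubic polynomial h(x) = x³ − 3(1−w₁)ρ σ₁ x² + (w₁²(1+2ρ²) − 3w₁(1+ρ²) + 2 + ρ²) σ₁² x − (1−w₁)³ρ σ₁³ has exactly one root in (0, ∞); moreover h is strictly increasing on ℝ, and h(x) < 0 for x ∈ [0, x̄) and h(x) > 0 for x > x̄, where x̄ is that root. -/
open Real

/-- For `w₁ ∈ (0,1)`, `ρ ∈ (0,1]`, `σ₁ > 0`, the cubic
`h(x) = x³ − 3(1−w₁)ρσ₁x² + (w₁²(1+2ρ²) − 3w₁(1+ρ²) + 2 + ρ²)σ₁²x − (1−w₁)³ρσ₁³`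
is strictly increasing on `ℝ`, has exactly one root `x̄` in `(0,∞)`, is negative on
`[0, x̄)` and positive on `(x̄, ∞)`. -/
theorem cubic_unique_positive_root (w₁ ρ σ₁ : ℝ) (hw : w₁ ∈ Set.Ioo (0 : ℝ) 1)
    (hρ : ρ ∈ Set.Ioc (0 : ℝ) 1) (hσ : 0 < σ₁) :
    StrictMono (fun x : ℝ =>
      x ^ 3 - 3 * (1 - w₁) * ρ * σ₁ * x ^ 2 +
        (w₁ ^ 2 * (1 + 2 * ρ ^ 2) - 3 * w₁ * (1 + ρ ^ 2) + 2 + ρ ^ 2) * σ₁ ^ 2 * x -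
        (1 - w₁) ^ 3 * ρ * σ₁ ^ 3) ∧
    ∃ xbar > (0 : ℝ),
      (xbar ^ 3 - 3 * (1 - w₁) * ρ * σ₁ * xbar ^ 2 +
        (w₁ ^ 2 * (1 + 2 * ρ ^ 2) - 3 * w₁ * (1 + ρ ^ 2) + 2 + ρ ^ 2) * σ₁ ^ 2 * xbar -
        (1 - w₁) ^ 3 * ρ * σ₁ ^ 3 = 0) ∧
      (∀ x > (0 : ℝ),
        x ^ 3 - 3 * (1 - w₁) * ρ * σ₁ * x ^ 2 +
          (w₁ ^ 2 * (1 + 2 * ρ ^ 2) - 3 * w₁ * (1 + ρ ^ 2) + 2 + ρ ^ 2) * σ₁ ^ 2 * x -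
          (1 - w₁) ^ 3 * ρ * σ₁ ^ 3 = 0 → x = xbar) ∧
      (∀ x, 0 ≤ x → x < xbar →
        x ^ 3 - 3 * (1 - w₁) * ρ * σ₁ * x ^ 2 +
          (w₁ ^ 2 * (1 + 2 * ρ ^ 2) - 3 * w₁ * (1 + ρ ^ 2) + 2 + ρ ^ 2) * σ₁ ^ 2 * x -
          (1 - w₁) ^ 3 * ρ * σ₁ ^ 3 < 0) ∧
      (∀ x, xbar < x →
        0 < x ^ 3 - 3 * (1 - w₁) * ρ * σ₁ * x ^ 2 +
          (w₁ ^ 2 * (1 + 2 * ρ ^ 2) - 3 * w₁ * (1 + ρ ^ 2) + 2 + ρ ^ 2) * σ₁ ^ 2 * x -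
          (1 - w₁) ^ 3 * ρ * σ₁ ^ 3) := by
  obtain ⟨hw0, hw1⟩ := hw
  obtain ⟨hρ0, hρ1⟩ := hρ
  set a : ℝ := w₁ ^ 2 * (1 + 2 * ρ ^ 2) - 3 * w₁ * (1 + ρ ^ 2) + 2 + ρ ^ 2 with ha
  set f : ℝ → ℝ := fun x =>
      x ^ 3 - 3 * (1 - w₁) * ρ * σ₁ * x ^ 2 + a * σ₁ ^ 2 * x -
        (1 - w₁) ^ 3 * ρ * σ₁ ^ 3 with hf
  have hw1' : (0:ℝ) < 1 - w₁ := by linarith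
  have hρsq : ρ ^ 2 ≤ 1 := by nlinarith
  have ha2 : 0 < a := by
    nlinarith [mul_nonneg (mul_nonneg (by linarith : (0:ℝ) ≤ 1 - ρ ^ 2) hw1'.le)
      (by linarith : (0:ℝ) ≤ 2 - w₁),
      mul_pos (mul_pos (mul_pos hw1' hw1') hρ0) hρ0]
  have hmono : StrictMono f := by
    intro x y hxy
    have hq : 0 < (x ^ 2 + x * y + y ^ 2) - 3 * (1 - w₁) * ρ * σ₁ * (x + y) + a * σ₁ ^ 2 := by
      have h1 : 0 < (y - x) ^ 2 := pow_pos (sub_pos.2 hxy) 2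
      have h2 : 0 ≤ σ₁ ^ 2 * ((1 - ρ ^ 2) * (1 - w₁) * (2 - w₁)) := by
        apply mul_nonneg (sq_nonneg σ₁)
        apply mul_nonneg (mul_nonneg (by linarith) hw1'.le) (by linarith)
      nlinarith [h1, h2, sq_nonneg (x + y - 2 * (1 - w₁) * ρ * σ₁)]
    have : f y - f x = (y - x) * ((x ^ 2 + x * y + y ^ 2) - 3 * (1 - w₁) * ρ * σ₁ * (x + y) + a * σ₁ ^ 2) := by
      simp only [hf]; ring
    nlinarith [mul_pos (sub_pos.2 hxy) hq]
  have hf0 : f 0 < 0 := by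
    simp only [hf]
    have : 0 < (1 - w₁) ^ 3 * ρ * σ₁ ^ 3 :=
      mul_pos (mul_pos (pow_pos hw1' 3) hρ0) (pow_pos hσ 3)
    nlinarith
  -- choose M with f M > 0
  set b : ℝ := 3 * (1 - w₁) * ρ * σ₁ with hb
  set d : ℝ := (1 - w₁) ^ 3 * ρ * σ₁ ^ 3 with hd
  have hbpos : 0 < b := by
    rw [hb]; exact mul_pos (mul_pos (mul_pos (by norm_num) hw1') hρ0) hσ
  have hdpos : 0 < d := by
    rw [hd]; exact mul_pos (mul_pos (pow_pos hw1' 3) hρ0) (pow_pos hσ 3)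
  have haσ : 0 < a * σ₁ ^ 2 := mul_pos ha2 (pow_pos hσ 2)
  have hcpos : 0 < (d + 1) / (a * σ₁ ^ 2) := div_pos (by linarith) haσ
  set M : ℝ := b + (d + 1) / (a * σ₁ ^ 2) with hM
  have hMb : b ≤ M := by rw [hM]; linarith
  have hMpos : 0 < M := lt_of_lt_of_le hbpos hMb
  have hfM : 0 < f M := by
    have h1 : a * σ₁ ^ 2 * M = a * σ₁ ^ 2 * b + (d + 1) := by
      field_simp [hM]
      rw [hM, mul_add, mul_div_cancel₀ _ haσ.ne']
    have h2 : f M = M ^ 2 * (M - b) + (a * σ₁ ^ 2 * M - d) := by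
      simp only [hf, hb, hd]; ring
    have h3 : 0 ≤ M ^ 2 * (M - b) := mul_nonneg (sq_nonneg M) (by linarith)
    nlinarith [mul_nonneg haσ.le hbpos.le]
  have hcont : ContinuousOn f (Set.Icc 0 M) := by
    apply Continuous.continuousOn
    rw [hf]
    exact (((continuous_pow 3).sub (continuous_const.mul (continuous_pow 2))).add
      (continuous_const.mul continuous_id)).sub continuous_const
  have := intermediate_value_Icc hMpos.le hcont
  have hmem : (0:ℝ) ∈ Set.Icc (f 0) (f M) := ⟨hf0.le, hfM.le⟩
  obtain ⟨xbar, hxmem, hxval⟩ := this hmem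
  have hxbar0 : 0 < xbar := by
    rcases lt_or_eq_of_le hxmem.1 with h | h
    · exact h
    · exfalso; rw [← h] at hxval; rw [hxval] at hf0; exact lt_irrefl 0 hf0
  refine ⟨hmono, xbar, hxbar0, hxval, ?_, ?_, ?_⟩
  · intro x _ hx
    exact hmono.injective (by rw [show f x = 0 from hx, hxval])
  · intro x _ hx
    have := hmono hx
    rw [hxval] at this
    exact this
  · intro x hx
    have := hmono hx
    rw [hxval] at this
    exact this
end
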